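/- arXiv:1008.1715 — 14 statements merged into one kernel-verified Lean document; each statement's English description precedes it below -/
import Mathlib

section
/- Let Σ be a type of characters and V a type of hash values, and let h be a function from finite strings over Σ (lists of elements of Σ, including the empty string) to V. Then h is an iterated hash function — i.e., there exist a compression function F : V → Σ → V and an initial value H₀ ∈ V such that h(s) = List.foldl F H₀ s for every string s — if and only if for all strings s, s' with h(s) = h(s'), one has h(s ++ s'') = h(s' ++ s'') for every string s''. -/
/-- a hash function `h` on variable-length strings is an iterated hash
function (i.e. computed by folding a compression function `F` from an initial value `H₀`)
iff whenever two strings collide, all their common extensions collide. -/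
theorem iterated_iff_collision_extends {A V : Type*} (h : List A → V) :
    (∃ (F : V → A → V) (H0 : V), ∀ s : List A, h s = List.foldl F H0 s) ↔
      (∀ s s' : List A, h s = h s' → ∀ s'' : List A, h (s ++ s'') = h (s' ++ s'')) := by
  constructor
  · rintro ⟨F, H0, hF⟩ s s' hss s''
    rw [hF, hF, List.foldl_append, List.foldl_append, ← hF, ← hF, hss]
  · intro H
    classical
    refine ⟨fun v a => if hv : ∃ s, h s = v then h (hv.choose ++ [a]) else v, h [], ?_⟩
    intro s
    induction s using List.reverseRecOn with
    | nil => simp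
    | append_singleton s a ih =>
      rw [List.foldl_append, ← ih]
      simp only [List.foldl_cons, List.foldl_nil]
      have hv : ∃ t, h t = h s := ⟨s, rfl⟩
      rw [dif_pos hv]
      exact (H _ _ hv.choose_spec [a]).symm
end

section
/- Let L ≥ 1, let Σ be a nonempty alphabet, and let μ be any probability distribution with finite support on functions from strings over Σ to Fin (2^L) such that every function in the support of μ is an iterated hash function. Then μ is not 3-wise independent over the strings of length at most 3: there exist three pairwise distinct strings s, s', s'' of length at most 3 and hash values y, y', y'' in Fin (2^L) such that the probability (under h drawn from μ) that h(s) = y and h(s') = y' and h(s'') = y'' is not equal to 1/2^(3L). -/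
open scoped ENNReal

/-- a finitely supported distribution on iterated hash functions into
`Fin (2^L)` (`L ≥ 1`) is never 3-wise independent over the strings of length at most 3. -/
theorem iterated_not_threewise_independent
    {A : Type*} [Nonempty A] (L : ℕ) (hL : 1 ≤ L)
    (μ : PMF (List A → Fin (2 ^ L))) (hfin : μ.support.Finite)
    (hiter : ∀ h ∈ μ.support, ∃ (F : Fin (2 ^ L) → A → Fin (2 ^ L)) (H0 : Fin (2 ^ L)),
      ∀ s : List A, h s = List.foldl F H0 s) :
    ∃ s s' s'' : List A, s.length ≤ 3 ∧ s'.length ≤ 3 ∧ s''.length ≤ 3 ∧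
      s ≠ s' ∧ s ≠ s'' ∧ s' ≠ s'' ∧
      ∃ y y' y'' : Fin (2 ^ L),
        (∑' h : List A → Fin (2 ^ L),
            if h s = y ∧ h s' = y' ∧ h s'' = y'' then μ h else 0) ≠ 1 / 2 ^ (3 * L) := by
  obtain ⟨a⟩ := ‹Nonempty A›
  have h2 : 1 < 2 ^ L := Nat.one_lt_two_pow (by omega)
  refine ⟨[], [a], [a, a], by simp, by simp, by simp, by simp, by simp, by simp,
    ⟨0, by omega⟩, ⟨0, by omega⟩, ⟨1, h2⟩, ?_⟩
  have hz : (∑' h : List A → Fin (2 ^ L),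
      if h [] = ⟨0, by omega⟩ ∧ h [a] = ⟨0, by omega⟩ ∧ h [a, a] = ⟨1, h2⟩
      then μ h else 0) = 0 := by
    rw [ENNReal.tsum_eq_zero]
    intro h
    split_ifs with hc
    · by_contra hne
      obtain ⟨F, H0, hF⟩ := hiter h hne
      obtain ⟨h1, h2', h3⟩ := hc
      rw [hF] at h1 h2' h3
      simp only [List.foldl] at h1 h2' h3
      rw [h1] at h2' h3
      rw [h2'] at h3
      rw [h2'] at h3
      simp [h2', Fin.ext_iff] at h3
    · rfl
  rw [hz]
  intro hcontra
  have : (1 : ℝ≥0∞) / 2 ^ (3 * L) ≠ 0 := by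
    simp [ENNReal.div_eq_zero_iff, ENNReal.pow_ne_top]
  exact this hcontra.symm
end

section
/- Let F be a finite field and n ≥ 1. For m = (m₁, m₂, …, m_{n+1}) ∈ F^{n+1}, define the multilinear hash of a string s = s₁s₂⋯s_k over F (with k ≤ n) by h_m(s) = m₁ + Σ_{i=1}^{k} m_{i+1}·sᵢ. Then for any two distinct nonempty strings s, s' over F of lengths at most n whose last characters are nonzero, and for any y, y' ∈ F, the number of tuples m ∈ F^{n+1} with h_m(s) = y and h_m(s') = y' equals |F|^{n−1}. Equivalently, when m is chosen uniformly at random from F^{n+1}, P(h_m(s)=y ∧ h_m(s')=y') = 1/|F|², so the multilinear family is pairwise independent over strings of length at most n not ending with the value zero. -/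
/-- The multilinear hash `h_m(s) = m₁ + Σ_{i=1}^{k} m_{i+1}·sᵢ` of a string `s` of length
`k ≤ n` over a field, with parameter tuple `m ∈ F^{n+1}`. -/
def multilinearHash {F : Type*} [CommRing F] {n : ℕ} (m : Fin (n + 1) → F)
    (s : List F) (hs : s.length ≤ n) : F :=
  m 0 + ∑ i : Fin s.length, m ((i.succ).castLE (Nat.succ_le_succ hs)) * s.get i

/-- Coefficient vector of the linear functional `m ↦ multilinearHash m s`. -/
def coeffVec {F : Type*} [CommRing F] (n : ℕ) (s : List F) : Fin (n + 1) → F :=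
  Fin.cons 1 (fun i : Fin n => s.getD i 0)

lemma hash_eq_sum {F : Type*} [CommRing F] {n : ℕ} (m : Fin (n + 1) → F)
    (s : List F) (hs : s.length ≤ n) :
    multilinearHash m s hs = ∑ j, coeffVec n s j * m j := by
  rw [Fin.sum_univ_succ]
  simp only [coeffVec, Fin.cons_zero, Fin.cons_succ, one_mul, multilinearHash]
  congr 1
  have hsub : ∑ i : Fin n, s.getD i 0 * m i.succ
      = ∑ i ∈ (Finset.univ : Finset (Fin s.length)).map (Fin.castLEEmb hs),
          s.getD i 0 * m i.succ := by
    refine (Finset.sum_subset (Finset.subset_univ _) ?_).symm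
    intro x _ hx
    have hlen : s.length ≤ (x : ℕ) := by
      by_contra h
      push_neg at h
      exact hx (Finset.mem_map.mpr ⟨⟨x, h⟩, Finset.mem_univ _, by ext; simp⟩)
    rw [List.getD_eq_default _ _ hlen, zero_mul]
  rw [hsub, Finset.sum_map]
  apply Finset.sum_congr rfl
  intro i _
  have hcast : (Fin.castLEEmb hs i).succ = (i.succ).castLE (Nat.succ_le_succ hs) := by
    ext; simp
  rw [hcast, mul_comm]
  congr 1
  simp [List.getD_eq_getElem s 0 i.isLt, List.get_eq_getElem]

lemma coeffVec_ne {F : Type*} [Field F] {n : ℕ}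
    (s s' : List F) (hs : s.length ≤ n) (hs' : s'.length ≤ n)
    (hne : s ≠ s') (hsnil : s ≠ []) (hs'nil : s' ≠ [])
    (hlast : s.getLast hsnil ≠ 0) (hlast' : s'.getLast hs'nil ≠ 0) :
    coeffVec n s ≠ coeffVec n s' := by
  intro h
  have hD : ∀ i : Fin n, s.getD i 0 = s'.getD i 0 := by
    intro i
    have := congrFun h i.succ
    simpa [coeffVec, Fin.cons_succ] using this
  have hpos : 0 < s.length := List.length_pos_iff.mpr hsnil
  have hpos' : 0 < s'.length := List.length_pos_iff.mpr hs'nil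
  have hlen : s.length = s'.length := by
    rcases lt_trichotomy s.length s'.length with h1 | h1 | h1
    · exfalso
      have hi : s'.length - 1 < n := by omega
      have := hD ⟨s'.length - 1, hi⟩
      rw [List.getD_eq_default _ _ (by simp; omega),
        List.getD_eq_getElem _ _ (by simp; omega)] at this
      exact hlast' (by rw [List.getLast_eq_getElem]; simpa using this.symm)
    · exact h1
    · exfalso
      have hi : s.length - 1 < n := by omega
      have := hD ⟨s.length - 1, hi⟩
      rw [List.getD_eq_getElem _ _ (by simp; omega),
        List.getD_eq_default _ _ (by simp; omega)] at this
      exact hlast (by rw [List.getLast_eq_getElem]; simpa using this)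
  apply hne
  apply List.ext_getElem hlen
  intro i h1 h2
  have := hD ⟨i, by omega⟩
  rwa [List.getD_eq_getElem _ _ (by simpa using h1),
    List.getD_eq_getElem _ _ (by simpa using h2)] at this

lemma exists_solution {F : Type*} [Field F] {n : ℕ}
    (a a' : Fin (n + 1) → F) (h0 : a 0 = 1) (h0' : a' 0 = 1) (hne : a ≠ a') (y y' : F) :
    ∃ m : Fin (n + 1) → F, (∑ j, a j * m j) = y ∧ (∑ j, a' j * m j) = y' := by
  obtain ⟨j, hj⟩ := Function.ne_iff.mp hne
  have hj0 : j ≠ 0 := by rintro rfl; exact hj (h0.trans h0'.symm)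
  have hd : a j - a' j ≠ 0 := sub_ne_zero.mpr hj
  set c : F := (y - y') / (a j - a' j) with hc
  set d : F := y - a j * c with hdd
  refine ⟨fun t => if t = 0 then d else if t = j then c else 0, ?_, ?_⟩
  · rw [Finset.sum_eq_add 0 j (Ne.symm hj0)
      (fun t _ ht => by simp [ht.1, ht.2])
      (by simp) (by simp)]
    simp [hj0, h0, hdd]
  · rw [Finset.sum_eq_add 0 j (Ne.symm hj0)
      (fun t _ ht => by simp [ht.1, ht.2])
      (by simp) (by simp)]
    simp only [if_pos rfl, if_neg hj0, h0', one_mul, hdd, hc, if_true]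
    field_simp
    ring

lemma hash_sub {F : Type*} [CommRing F] {n : ℕ} (m m' : Fin (n + 1) → F)
    (s : List F) (hs : s.length ≤ n) :
    multilinearHash (m - m') s hs = multilinearHash m s hs - multilinearHash m' s hs := by
  simp [multilinearHash, sub_mul, Finset.sum_sub_distrib]
  ring

/-- for distinct nonempty strings of length at most `n` over a finite field,
ending in nonzero characters, the number of parameter tuples `m ∈ F^{n+1}` hashing them to
prescribed values `y, y'` is exactly `|F|^{n-1}`; equivalently the multilinear family is
pairwise independent (each pair of values has probability `1/|F|²`). -/
theorem multilinear_pairwise_independent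
    {F : Type*} [Field F] [Fintype F] [DecidableEq F] {n : ℕ} (hn : 1 ≤ n)
    (s s' : List F) (hs : s.length ≤ n) (hs' : s'.length ≤ n)
    (hne : s ≠ s') (hsnil : s ≠ []) (hs'nil : s' ≠ [])
    (hlast : s.getLast hsnil ≠ 0) (hlast' : s'.getLast hs'nil ≠ 0)
    (y y' : F) :
    (Finset.univ.filter fun m : Fin (n + 1) → F =>
        multilinearHash m s hs = y ∧ multilinearHash m s' hs' = y').card
      = Fintype.card F ^ (n - 1) ∧
    ((Finset.univ.filter fun m : Fin (n + 1) → F =>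
        multilinearHash m s hs = y ∧ multilinearHash m s' hs' = y').card : ℚ)
        / Fintype.card (Fin (n + 1) → F) = 1 / (Fintype.card F : ℚ) ^ 2 := by
  classical
  -- all fibers have the same cardinality
  have hfib : ∀ z z' : F,
      (Finset.univ.filter fun m : Fin (n + 1) → F =>
        multilinearHash m s hs = z ∧ multilinearHash m s' hs' = z').card
      = (Finset.univ.filter fun m : Fin (n + 1) → F =>
        multilinearHash m s hs = 0 ∧ multilinearHash m s' hs' = 0).card := by
    intro z z'
    obtain ⟨m₀, hm₀, hm₀'⟩ := exists_solution (coeffVec n s) (coeffVec n s')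
      (by simp [coeffVec]) (by simp [coeffVec])
      (coeffVec_ne s s' hs hs' hne hsnil hs'nil hlast hlast') z z'
    rw [← hash_eq_sum (hs := hs)] at hm₀
    rw [← hash_eq_sum (hs := hs')] at hm₀'
    apply Finset.card_bij' (fun m _ => m - m₀) (fun m _ => m + m₀)
    · intro m hm
      simp only [Finset.mem_filter, Finset.mem_univ, true_and] at hm ⊢
      rw [hash_sub, hash_sub, hm.1, hm.2, hm₀, hm₀']
      simp
    · intro m hm
      simp only [Finset.mem_filter, Finset.mem_univ, true_and] at hm ⊢
      have h1 : m + m₀ - m₀ = m := by ring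
      constructor
      · have := hash_sub (m + m₀) m₀ s hs
        rw [h1, hm.1, hm₀] at this
        exact sub_eq_zero.mp this.symm
      · have := hash_sub (m + m₀) m₀ s' hs'
        rw [h1, hm.2, hm₀'] at this
        exact sub_eq_zero.mp this.symm
    · intro m _; ring
    · intro m _; ring
  set c0 := (Finset.univ.filter fun m : Fin (n + 1) → F =>
      multilinearHash m s hs = 0 ∧ multilinearHash m s' hs' = 0).card with hc0
  -- total count
  have htot : Fintype.card (Fin (n + 1) → F) = Fintype.card F ^ 2 * c0 := by
    have := Finset.card_eq_sum_card_fiberwise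
      (f := fun m : Fin (n + 1) → F => (multilinearHash m s hs, multilinearHash m s' hs'))
      (s := Finset.univ) (t := Finset.univ) (fun x _ => Finset.mem_univ _)
    rw [Finset.card_univ] at this
    rw [this]
    have heach : ∀ p : F × F,
        (Finset.univ.filter fun m : Fin (n + 1) → F =>
          (multilinearHash m s hs, multilinearHash m s' hs') = p).card = c0 := by
      intro p
      rw [← hfib p.1 p.2]
      congr 1
      apply Finset.filter_congr
      intro m _
      simp [Prod.ext_iff]
    rw [Finset.sum_congr rfl (fun p _ => heach p), Finset.sum_const, Finset.card_univ,
      Fintype.card_prod, smul_eq_mul]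
    ring
  have hq : 0 < Fintype.card F := Fintype.card_pos
  have hcard : Fintype.card (Fin (n + 1) → F) = Fintype.card F ^ (n + 1) := by
    simp [Fintype.card_fun]
  have hc0val : c0 = Fintype.card F ^ (n - 1) := by
    have h1 : Fintype.card F ^ 2 * c0 = Fintype.card F ^ 2 * Fintype.card F ^ (n - 1) := by
      rw [← htot, hcard, ← pow_add]
      congr 1
      omega
    exact Nat.eq_of_mul_eq_mul_left (by positivity) h1
  have hkey : (Finset.univ.filter fun m : Fin (n + 1) → F =>
        multilinearHash m s hs = y ∧ multilinearHash m s' hs' = y').card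
      = Fintype.card F ^ (n - 1) := by
    rw [hfib y y', hc0val]
  refine ⟨hkey, ?_⟩
  rw [hkey, hcard]
  have hqQ : (0 : ℚ) < (Fintype.card F : ℚ) := by exact_mod_cast hq
  rw [Nat.cast_pow, Nat.cast_pow]
  rw [div_eq_div_iff (by positivity) (by positivity)]
  rw [one_mul, ← pow_add]
  congr 1
  omega
end

section
/- Let L ≥ 1, let Σ be an alphabet with at least two characters, and let μ be any probability distribution with finite support on functions from strings over Σ to Fin (2^L) such that every function in the support of μ is a generalized iterated hash function. Then μ is not 4-wise independent over the strings of length at most 2: there exist four pairwise distinct strings of length at most 2 and hash values y⁽¹⁾, y⁽²⁾, y⁽³⁾, y⁽⁴⁾ such that the probability that the four strings hash to these four values respectively is not equal to 1/2^(4L). -/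
open scoped ENNReal

/-- Fold for generalized iterated hashing: a (possibly different) compression function
`F i` is used for the character processed at step `i`. -/
def genIterFold {V A : Type*} (F : ℕ → V → A → V) : ℕ → V → List A → V
  | _, y, [] => y
  | i, y, c :: s => genIterFold F (i + 1) (F i y c) s

/-- a finitely supported distribution on generalized iterated hash functions
into `Fin (2^L)` (`L ≥ 1`, alphabet with at least two characters) is never 4-wise
independent over the strings of length at most 2. -/
theorem generalized_iterated_not_fourwise_independent
    {A : Type*} [Nontrivial A] (L : ℕ) (hL : 1 ≤ L)
    (μ : PMF (List A → Fin (2 ^ L))) (hfin : μ.support.Finite)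
    (hiter : ∀ h ∈ μ.support,
      ∃ (F : ℕ → Fin (2 ^ L) → A → Fin (2 ^ L)) (H0 : Fin (2 ^ L)),
        ∀ s : List A, h s = genIterFold F 1 H0 s) :
    ∃ s1 s2 s3 s4 : List A,
      s1.length ≤ 2 ∧ s2.length ≤ 2 ∧ s3.length ≤ 2 ∧ s4.length ≤ 2 ∧
      s1 ≠ s2 ∧ s1 ≠ s3 ∧ s1 ≠ s4 ∧ s2 ≠ s3 ∧ s2 ≠ s4 ∧ s3 ≠ s4 ∧
      ∃ y1 y2 y3 y4 : Fin (2 ^ L),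
        (∑' h : List A → Fin (2 ^ L),
            if h s1 = y1 ∧ h s2 = y2 ∧ h s3 = y3 ∧ h s4 = y4 then μ h else 0)
          ≠ 1 / 2 ^ (4 * L) := by
  obtain ⟨a, b, hab⟩ := exists_pair_ne A
  haveI : NeZero (2 ^ L) := ⟨by positivity⟩
  have h2 : 2 ≤ 2 ^ L := by
    calc 2 = 2 ^ 1 := rfl
    _ ≤ 2 ^ L := Nat.pow_le_pow_right (by norm_num) hL
  have h01 : (0 : Fin (2 ^ L)) ≠ 1 := by
    intro h
    have := congrArg Fin.val h
    simp [Fin.val_one', Nat.mod_eq_of_lt h2] at this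
  refine ⟨[a], [b], [a, a], [b, a], by simp, by simp, by simp, by simp,
    by simp [hab], by simp, by simp, by simp, by simp [hab], by simp [hab],
    0, 0, 0, 1, ?_⟩
  have hzero : (∑' h : List A → Fin (2 ^ L),
      if h [a] = 0 ∧ h [b] = 0 ∧ h [a, a] = 0 ∧ h [b, a] = 1 then μ h else 0) = 0 := by
    rw [ENNReal.tsum_eq_zero]
    intro h
    split_ifs with hc
    · by_contra hne
      obtain ⟨F, H0, hF⟩ := hiter h hne
      obtain ⟨h1, h2', h3, h4⟩ := hc
      rw [hF] at h1 h2' h3 h4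
      simp only [genIterFold] at h1 h2' h3 h4
      rw [h1, h2'] at *
      have : F 2 (0 : Fin (2 ^ L)) a = F 2 (0 : Fin (2 ^ L)) a := rfl
      rw [h1] at h3
      rw [h2'] at h4
      exact h01 (h3 ▸ h4 ▸ rfl)
    · rfl
  rw [hzero]
  intro h
  have : (1 : ℝ≥0∞) / 2 ^ (4 * L) ≠ 0 := by
    simp [ENNReal.div_eq_zero_iff, ENNReal.pow_ne_top]
  exact this h.symm
end

section
/- Let Σ be an alphabet, V a finite set of hash values, n ≥ 2, and let μ be a probability distribution with finite support on iterated hash functions from strings over Σ to V. Suppose there is a constant ε such that P(h(s) = h(s')) = ε for every pair of distinct strings s, s' of length at most n. Then every hash function h in the support of μ has a permuting compression in the following sense: for all strings s, s' and every character c ∈ Σ with the extended strings s ++ [c] and s' ++ [c] of length at most n, if h(s) ≠ h(s') then h(s ++ [c]) ≠ h(s' ++ [c]). -/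
open scoped ENNReal

/-- if a finitely supported distribution on iterated hash functions has a
constant collision probability `ε` over all pairs of distinct strings of length at most
`n ≥ 2`, then every hash function in its support has a permuting compression: appending a
common character to two strings with distinct hash values (staying within length `n`)
yields distinct hash values. -/
theorem fixed_collision_prob_implies_permuting
    {A V : Type*} [Fintype V] [DecidableEq V] (n : ℕ) (hn : 2 ≤ n)
    (μ : PMF (List A → V)) (hfin : μ.support.Finite)
    (hiter : ∀ h ∈ μ.support, ∃ (F : V → A → V) (H0 : V),
      ∀ s : List A, h s = List.foldl F H0 s)
    (ε : ℝ≥0∞)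
    (hconst : ∀ s s' : List A, s ≠ s' → s.length ≤ n → s'.length ≤ n →
      (∑' h : List A → V, if h s = h s' then μ h else 0) = ε) :
    ∀ h ∈ μ.support, ∀ (s s' : List A) (c : A),
      (s ++ [c]).length ≤ n → (s' ++ [c]).length ≤ n →
      h s ≠ h s' → h (s ++ [c]) ≠ h (s' ++ [c]) := by
  classical
  intro h hh s s' c hls hls' hne hcontra
  have hss' : s ≠ s' := fun e => hne (by rw [e])
  have hext : s ++ [c] ≠ s' ++ [c] := by simpa using hss'
  have hl1 : s.length ≤ n := by simp at hls; omega
  have hl1' : s'.length ≤ n := by simp at hls'; omega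
  have h1 := hconst s s' hss' hl1 hl1'
  have h2 := hconst (s ++ [c]) (s' ++ [c]) hext hls hls'
  have key : ∀ g : List A → V,
      (if g s = g s' then μ g else 0) + (if g = h then μ h else 0)
        ≤ (if g (s ++ [c]) = g (s' ++ [c]) then μ g else 0) := by
    intro g
    by_cases hg : g = h
    · subst hg
      simp [hne, hcontra]
    · simp only [hg, if_false, add_zero]
      by_cases hc : g s = g s'
      · by_cases hsup : g ∈ μ.support
        · obtain ⟨F, H0, hF⟩ := hiter g hsup
          have hcc : g (s ++ [c]) = g (s' ++ [c]) := by
            rw [hF, hF, List.foldl_append, List.foldl_append, ← hF, ← hF, hc]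
          simp [hc, hcc]
        · have hz : μ g = 0 := by simpa [PMF.mem_support_iff, not_not] using hsup
          simp [hz]
      · simp [hc]
  have hsum := ENNReal.tsum_le_tsum key
  rw [ENNReal.tsum_add, h1, h2, tsum_ite_eq] at hsum
  have hεle : ε ≤ 1 := by
    rw [← h1]
    calc (∑' g : List A → V, if g s = g s' then μ g else 0)
        ≤ ∑' g : List A → V, μ g := ENNReal.tsum_le_tsum fun g => by split <;> simp
      _ = 1 := μ.tsum_coe
  have hεtop : ε ≠ ⊤ := (lt_of_le_of_lt hεle ENNReal.one_lt_top).ne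
  have hμh : μ h ≠ 0 := hh
  have : ε + μ h ≤ ε + 0 := by simpa using hsum
  exact hμh (le_antisymm (by exact_mod_cast (ENNReal.add_le_add_iff_left hεtop).mp this) zero_le)
end

section
/- Let p be a prime and let 1 ≤ n ≤ p. Working over the field 𝔽_p = ZMod p, with the Carter–Wegman polynomial hash h_t(s₁⋯s_k) = t^k + Σ_{i=1}^{k} sᵢ·t^{k−i}, there exist two distinct strings s, s' over 𝔽_p, each of length at most n, such that the set {t ∈ 𝔽_p : h_t(s) = h_t(s')} has exactly n elements. Hence the collision bound n/p for strings of length at most n is tight: for t uniform in 𝔽_p, P(h_t(s) = h_t(s')) = n/p for this pair. -/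
/-- The Carter–Wegman polynomial hash `h_t(s₁⋯s_k) = t^k + Σ_{i=1}^{k} sᵢ·t^{k−i}`,
computed as the iterated hash with compression function `(y, c) ↦ t·y + c` and initial
value `1`. -/
def cwHash {F : Type*} [CommRing F] (t : F) (s : List F) : F :=
  List.foldl (fun y c => t * y + c) 1 s

open Polynomial

lemma cwHash_concat {F : Type*} [CommRing F] (t : F) (l : List F) (c : F) :
    cwHash t (l ++ [c]) = t * cwHash t l + c := by
  simp [cwHash, List.foldl_append]

lemma monic_divX {F : Type*} [CommRing F] [Nontrivial F] (P : F[X]) (h : P.Monic)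
    (h1 : 1 ≤ P.natDegree) : P.divX.Monic := by
  unfold Polynomial.Monic
  rw [Polynomial.leadingCoeff, natDegree_divX_eq_natDegree_tsub_one, coeff_divX,
    Nat.sub_add_cancel h1]
  exact h

lemma exists_string (F : Type*) [CommRing F] [Nontrivial F] (n : ℕ) (P : F[X])
    (hm : P.Monic) (hd : P.natDegree = n) :
    ∃ s : List F, s.length = n ∧ ∀ t, cwHash t s = P.eval t := by
  induction n generalizing P with
  | zero =>
    refine ⟨[], rfl, fun t => ?_⟩
    rw [(Polynomial.Monic.natDegree_eq_zero hm).mp hd]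
    simp [cwHash]
  | succ n ih =>
    obtain ⟨s, hs, hval⟩ := ih P.divX (monic_divX P hm (by omega))
      (by rw [natDegree_divX_eq_natDegree_tsub_one, hd]; omega)
    refine ⟨s ++ [P.coeff 0], by simp [hs], fun t => ?_⟩
    rw [cwHash_concat, hval]
    have h := divX_mul_X_add P
    conv_rhs => rw [← h]
    simp only [eval_add, eval_mul, eval_X, eval_C]
    ring

/-- over `𝔽_p = ZMod p` (`p` prime, `1 ≤ n ≤ p`) the CWPoly collision bound
`n/p` is tight: there exist two distinct strings of length at most `n` colliding for
exactly `n` values of `t`, so their collision probability is exactly `n / p`. -/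
theorem cwpoly_bound_tight (p : ℕ) [Fact p.Prime] (n : ℕ) (hn1 : 1 ≤ n) (hnp : n ≤ p) :
    ∃ s s' : List (ZMod p), s ≠ s' ∧ s.length ≤ n ∧ s'.length ≤ n ∧
      (Finset.univ.filter fun t : ZMod p => cwHash t s = cwHash t s').card = n ∧
      ((Finset.univ.filter fun t : ZMod p => cwHash t s = cwHash t s').card : ℚ) / p
        = (n : ℚ) / p := by
  set Q : (ZMod p)[X] := ∏ i ∈ Finset.range n, (X - C (i : ZMod p)) with hQ
  have hQm : Q.Monic := monic_prod_of_monic _ _ fun i _ => monic_X_sub_C _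
  have hQd : Q.natDegree = n := by
    rw [hQ, natDegree_prod _ _ fun i _ => (monic_X_sub_C _).ne_zero]
    simp only [natDegree_X_sub_C]
    simp
  have hQdeg : Q.degree = n := by rw [degree_eq_natDegree hQm.ne_zero, hQd]
  have hdeg1 : (1 : (ZMod p)[X]).degree < Q.degree := by
    rw [hQdeg, Polynomial.degree_one]
    exact_mod_cast (by omega : 0 < n)
  set P : (ZMod p)[X] := Q + 1 with hP
  have hPm : P.Monic := hQm.add_of_left hdeg1
  have hPd : P.natDegree = n :=
    (natDegree_eq_of_degree_eq (degree_add_eq_left_of_degree_lt hdeg1)).trans hQd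
  obtain ⟨s, hs, hval⟩ := exists_string (ZMod p) n P hPm hPd
  have hne : s ≠ [] := by intro h; rw [h] at hs; simp at hs; omega
  have key : ∀ t : ZMod p, (cwHash t s = cwHash t []) ↔ Q.eval t = 0 := by
    intro t
    rw [hval]
    simp [cwHash, hP]
  have hset : (Finset.univ.filter fun t : ZMod p => cwHash t s = cwHash t []) =
      (Finset.range n).image (Nat.cast : ℕ → ZMod p) := by
    ext t
    simp only [Finset.mem_filter, Finset.mem_univ, true_and, Finset.mem_image,
      Finset.mem_range, key]
    rw [hQ, eval_prod]
    rw [Finset.prod_eq_zero_iff]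
    constructor
    · rintro ⟨i, hi, h⟩
      exact ⟨i, Finset.mem_range.mp hi, by simpa [sub_eq_zero, eq_comm] using h⟩
    · rintro ⟨i, hi, rfl⟩
      exact ⟨i, Finset.mem_range.mpr hi, by simp⟩
  have hcard : ((Finset.range n).image (Nat.cast : ℕ → ZMod p)).card = n := by
    rw [Finset.card_image_of_injOn, Finset.card_range]
    intro a ha b hb hab
    simp only [Finset.coe_range, Set.mem_Iio] at ha hb
    rw [← ZMod.val_cast_of_lt (show a < p by omega), hab,
      ZMod.val_cast_of_lt (show b < p by omega)]
  exact ⟨s, [], hne, le_of_eq hs, by simp, by rw [hset, hcard],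
    by rw [hset, hcard]⟩
end

section
/- Let F be a finite field of cardinality p and n ≥ 1. For t ∈ F with t ≠ 0 and ζ ∈ F, define the modified Carter–Wegman polynomial hash of a string s = s₁⋯s_k over F (k ≤ n) by ĥ_{t,ζ}(s) = t^{k+1} + Σ_{i=1}^{k} sᵢ·t^{i} + ζ. If t is chosen uniformly at random among the p−1 nonzero elements of F and ζ uniformly at random in F, independently, then for any two distinct strings s, s' of lengths at most n and any hash values y, y' ∈ F, P(ĥ_{t,ζ}(s) = y ∧ ĥ_{t,ζ}(s') = y') ≤ (n+1)/((p−1)·p). Equivalently, the number of pairs (t, ζ) with t ≠ 0 satisfying both equations is at most n+1. In particular this modified family is (n+1)/(p−1)-almost strongly universal over strings of length at most n. -/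
open Polynomial

/-- The modified Carter–Wegman polynomial hash
`ĥ_{t,ζ}(s₁⋯s_k) = t^{k+1} + Σ_{i=1}^{k} sᵢ·t^{i} + ζ`. -/
def mcwHash {F : Type*} [CommRing F] (t ζ : F) (s : List F) : F :=
  t ^ (s.length + 1) + (∑ i : Fin s.length, s.get i * t ^ ((i : ℕ) + 1)) + ζ

noncomputable def mcwPoly {F : Type*} [CommRing F] (s : List F) : F[X] :=
  X ^ (s.length + 1) + ∑ i : Fin s.length, C (s.get i) * X ^ ((i : ℕ) + 1)

lemma mcwPoly_eval {F : Type*} [CommRing F] (t : F) (s : List F) :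
    (mcwPoly s).eval t = t ^ (s.length + 1) + ∑ i : Fin s.length, s.get i * t ^ ((i : ℕ) + 1) := by
  simp [mcwPoly, eval_finset_sum]

lemma mcwHash_eq {F : Type*} [CommRing F] (t ζ : F) (s : List F) :
    mcwHash t ζ s = (mcwPoly s).eval t + ζ := by
  rw [mcwPoly_eval]; rfl

lemma mcwPoly_natDegree_le {F : Type*} [CommRing F] (s : List F) :
    (mcwPoly s).natDegree ≤ s.length + 1 := by
  apply le_trans (Polynomial.natDegree_add_le _ _)
  apply max_le
  · exact Polynomial.natDegree_X_pow_le _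
  · apply Polynomial.natDegree_sum_le_of_forall_le
    intro i _
    calc (C (s.get i) * X ^ ((i : ℕ) + 1)).natDegree
        ≤ (X ^ ((i : ℕ) + 1) : F[X]).natDegree := Polynomial.natDegree_C_mul_le _ _
      _ ≤ (i : ℕ) + 1 := Polynomial.natDegree_X_pow_le _
      _ ≤ s.length + 1 := by have := i.isLt; omega

lemma mcwPoly_coeff_top {F : Type*} [CommRing F] (s : List F) :
    (mcwPoly s).coeff (s.length + 1) = 1 := by
  simp only [mcwPoly, Polynomial.coeff_add, Polynomial.coeff_X_pow, if_pos rfl,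
    Polynomial.finset_sum_coeff, Polynomial.coeff_C_mul]
  rw [Finset.sum_eq_zero]
  · simp
  · intro i _
    have : ¬ (s.length + 1 = (i : ℕ) + 1) := by have := i.isLt; omega
    simp [this]
    intro h; exact absurd (by omega) this

lemma mcwPoly_coeff_mid {F : Type*} [CommRing F] (s : List F) (j : Fin s.length) :
    (mcwPoly s).coeff ((j : ℕ) + 1) = s.get j := by
  simp only [mcwPoly, Polynomial.coeff_add, Polynomial.coeff_X_pow,
    Polynomial.finset_sum_coeff, Polynomial.coeff_C_mul]
  have h1 : ¬ ((j : ℕ) + 1 = s.length + 1) := by have := j.isLt; omega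
  rw [if_neg h1, zero_add, Finset.sum_eq_single j]
  · simp
  · intro i _ hij
    have : ¬ ((j : ℕ) + 1 = (i : ℕ) + 1) := fun h => hij (Fin.ext (by omega))
    simp [this]
    intro h; exact absurd (by omega) this
  · simp

lemma mcwPoly_coeff_big {F : Type*} [CommRing F] (s : List F) (d : ℕ) (hd : s.length + 1 < d) :
    (mcwPoly s).coeff d = 0 :=
  Polynomial.coeff_eq_zero_of_natDegree_lt (lt_of_le_of_lt (mcwPoly_natDegree_le s) hd)

/-- for any two distinct strings of length at most `n` over a finite field of
cardinality `p` and any target values `y, y'`, at most `n + 1` pairs `(t, ζ)` with `t ≠ 0`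
satisfy both hash equations; hence for `t` uniform among nonzero elements and `ζ` uniform
in `F`, `P(ĥ(s) = y ∧ ĥ(s') = y') ≤ (n+1)/((p−1)·p)`; the modified family is
`(n+1)/(p−1)`-almost strongly universal. -/
theorem modified_cwpoly_almost_strongly_universal
    {F : Type*} [Field F] [Fintype F] [DecidableEq F] {n : ℕ} (hn : 1 ≤ n)
    (s s' : List F) (hs : s.length ≤ n) (hs' : s'.length ≤ n) (hne : s ≠ s')
    (y y' : F) :
    (Finset.univ.filter fun tz : F × F =>
        tz.1 ≠ 0 ∧ mcwHash tz.1 tz.2 s = y ∧ mcwHash tz.1 tz.2 s' = y').card ≤ n + 1 ∧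
    ((Finset.univ.filter fun tz : F × F =>
        tz.1 ≠ 0 ∧ mcwHash tz.1 tz.2 s = y ∧ mcwHash tz.1 tz.2 s' = y').card : ℚ)
        / (((Fintype.card F : ℚ) - 1) * (Fintype.card F : ℚ))
      ≤ ((n : ℚ) + 1) / (((Fintype.card F : ℚ) - 1) * (Fintype.card F : ℚ)) := by
  classical
  set P : F[X] := mcwPoly s - mcwPoly s' - C (y - y') with hP
  have hPne : P ≠ 0 := by
    rcases eq_or_ne s.length s'.length with hlen | hlen
    · have : ∃ j : Fin s.length, s.get j ≠ s'.get ⟨j, by omega⟩ := by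
        by_contra h
        push_neg at h
        exact hne (List.ext_get hlen (fun i h1 h2 => h ⟨i, h1⟩))
      obtain ⟨j, hj⟩ := this
      intro h0
      have hc := congrArg (fun q => Polynomial.coeff q ((j : ℕ) + 1)) h0
      simp only [hP, Polynomial.coeff_sub, Polynomial.coeff_zero] at hc
      rw [mcwPoly_coeff_mid s j, Polynomial.coeff_C, if_neg (by omega),
        show ((j : ℕ) + 1) = ((⟨j, by omega⟩ : Fin s'.length) : ℕ) + 1 from rfl,
        mcwPoly_coeff_mid s' ⟨j, by omega⟩] at hc
      rw [sub_zero, sub_eq_zero] at hc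
      exact hj hc
    · rcases lt_or_gt_of_ne hlen with hlt | hlt
      · intro h0
        have hc := congrArg (fun q => Polynomial.coeff q (s'.length + 1)) h0
        simp only [hP, Polynomial.coeff_sub, Polynomial.coeff_zero] at hc
        rw [mcwPoly_coeff_top s', mcwPoly_coeff_big s _ (by omega),
          Polynomial.coeff_C, if_neg (by omega)] at hc
        norm_num at hc
      · intro h0
        have hc := congrArg (fun q => Polynomial.coeff q (s.length + 1)) h0
        simp only [hP, Polynomial.coeff_sub, Polynomial.coeff_zero] at hc
        rw [mcwPoly_coeff_top s, mcwPoly_coeff_big s' _ (by omega),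
          Polynomial.coeff_C, if_neg (by omega)] at hc
        norm_num at hc
  have hPdeg : P.natDegree ≤ n + 1 := by
    apply le_trans (Polynomial.natDegree_sub_le _ _)
    apply max_le
    · apply le_trans (Polynomial.natDegree_sub_le _ _)
      exact max_le (le_trans (mcwPoly_natDegree_le s) (by omega))
        (le_trans (mcwPoly_natDegree_le s') (by omega))
    · simp
  have hcard : (Finset.univ.filter fun tz : F × F =>
        tz.1 ≠ 0 ∧ mcwHash tz.1 tz.2 s = y ∧ mcwHash tz.1 tz.2 s' = y').card ≤ n + 1 := by
    have hmap : ∀ tz ∈ (Finset.univ.filter fun tz : F × F =>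
        tz.1 ≠ 0 ∧ mcwHash tz.1 tz.2 s = y ∧ mcwHash tz.1 tz.2 s' = y'),
        tz.1 ∈ P.roots.toFinset := by
      intro tz htz
      simp only [Finset.mem_filter, Finset.mem_univ, true_and] at htz
      obtain ⟨ht0, h1, h2⟩ := htz
      rw [mcwHash_eq] at h1 h2
      rw [Multiset.mem_toFinset, Polynomial.mem_roots hPne]
      show P.eval tz.1 = 0
      simp only [hP, Polynomial.eval_sub, Polynomial.eval_C]
      have e1 : (mcwPoly s).eval tz.1 = y - tz.2 := by linear_combination h1
      have e2 : (mcwPoly s').eval tz.1 = y' - tz.2 := by linear_combination h2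
      rw [e1, e2]; ring
    have hinj : Set.InjOn Prod.fst ((Finset.univ.filter fun tz : F × F =>
        tz.1 ≠ 0 ∧ mcwHash tz.1 tz.2 s = y ∧ mcwHash tz.1 tz.2 s' = y') : Set (F × F)) := by
      intro a ha b hb hab
      simp only [Finset.coe_filter, Set.mem_setOf_eq, Finset.mem_univ, true_and] at ha hb
      obtain ⟨-, ha1, -⟩ := ha
      obtain ⟨-, hb1, -⟩ := hb
      rw [mcwHash_eq] at ha1 hb1
      have : a.2 = b.2 := by
        rw [hab] at ha1
        linear_combination ha1 - hb1
      exact Prod.ext hab this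
    calc (Finset.univ.filter fun tz : F × F =>
        tz.1 ≠ 0 ∧ mcwHash tz.1 tz.2 s = y ∧ mcwHash tz.1 tz.2 s' = y').card
        ≤ P.roots.toFinset.card := Finset.card_le_card_of_injOn Prod.fst hmap hinj
      _ ≤ Multiset.card P.roots := Multiset.toFinset_card_le _
      _ ≤ P.natDegree := Polynomial.card_roots' P
      _ ≤ n + 1 := hPdeg
  refine ⟨hcard, ?_⟩
  have hp2 : (2 : ℚ) ≤ (Fintype.card F : ℚ) := by exact_mod_cast Fintype.one_lt_card
  have hpos : (0 : ℚ) < ((Fintype.card F : ℚ) - 1) * (Fintype.card F : ℚ) := by nlinarith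
  exact (div_le_div_iff_of_pos_right hpos).mpr (by exact_mod_cast hcard)
end

section
/- Let K be a finite field of characteristic 2 with 2^L elements, and let x ∈ K be an element such that 1, x, x², …, x^{L−1} are linearly independent over the prime subfield (equivalently, x generates K over GF(2)). Let Σ be a finite alphabet. For a function Γ : Σ → K and an initial value H₀ ∈ K, define the tabulated hash of a string s = s₁⋯s_k by h_{Γ,H₀}(s) = x^k·H₀ + Σ_{i=1}^{k} x^{k−i}·Γ(sᵢ) (the iterated hash with compression function (y,c) ↦ x·y + Γ(c) and initial value H₀). If Γ is chosen uniformly at random among all functions Σ → K and H₀ uniformly at random in K, independently, then for any two distinct nonempty strings s, s' over Σ of lengths at most L and any y, y' ∈ K, P(h_{Γ,H₀}(s) = y ∧ h_{Γ,H₀}(s') = y') = 1/2^{2L}. That is, the Tabulated family is pairwise independent over strings of length at most L. -/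
open Finset

-- fold formula
theorem fold_formula {K : Type*} [Field K] (x : K) {A : Type*} (g : A → K) (d : A) :
    ∀ (r : List A) (z : K), List.foldl (fun v c => x * v + g c) z r.reverse
      = x ^ r.length * z + ∑ e ∈ Finset.range r.length, x ^ e * g (r.getD e d) := by
  intro r
  induction r with
  | nil => intro z; simp
  | cons c r ih =>
    intro z
    rw [List.reverse_cons, List.foldl_append]
    simp only [List.foldl_cons, List.foldl_nil, ih z]
    rw [List.length_cons, Finset.sum_range_succ' (fun e => x ^ e * g ((c :: r).getD e d))]
    simp only [List.getD_cons_succ, List.getD_cons_zero, pow_zero, one_mul, pow_succ]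
    rw [mul_add, Finset.mul_sum]
    have hsum : ∑ e ∈ Finset.range r.length, x * (x ^ e * g (r.getD e d))
        = ∑ e ∈ Finset.range r.length, x ^ e * x * g (r.getD e d) :=
      Finset.sum_congr rfl (fun e _ => by ring)
    rw [hsum]
    ring

-- fiber counting
theorem fiber_count {V W : Type*} [AddCommGroup V] [Fintype V] [DecidableEq V]
    [AddCommGroup W] [Fintype W] [DecidableEq W]
    (f : V →+ W) (hsurj : Function.Surjective f) (w : W) :
    (Finset.univ.filter fun v => f v = w).card * Fintype.card W = Fintype.card V := by
  have key : ∀ u : W, (Finset.univ.filter fun v => f v = u).card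
      = (Finset.univ.filter fun v => f v = 0).card := by
    intro u
    obtain ⟨v₀, hv₀⟩ := hsurj u
    apply Finset.card_bij' (fun v _ => v - v₀) (fun v _ => v + v₀)
    · intro a ha; simp only [Finset.mem_filter, Finset.mem_univ, true_and] at ha ⊢
      rw [map_sub, ha, hv₀, sub_self]
    · intro a ha; simp only [Finset.mem_filter, Finset.mem_univ, true_and] at ha ⊢
      rw [map_add, ha, hv₀, zero_add]
    · intro a _; simp
    · intro a _; simp
  have total : ∑ u : W, (Finset.univ.filter fun v => f v = u).card = Fintype.card V := by
    rw [← Finset.card_univ (α := V),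
      Finset.card_eq_sum_card_fiberwise (fun v _ => Finset.mem_univ (f v))]
  rw [key w]
  have : ∑ u : W, (Finset.univ.filter fun v => f v = 0).card
      = Fintype.card W * (Finset.univ.filter fun v => f v = 0).card := by
    simp [Finset.sum_const, Finset.card_univ, mul_comm]
  rw [← total]
  simp only [key] at *
  rw [this, mul_comm]

-- independence helper
theorem eps_zero {K : Type*} [Field K] [Algebra (ZMod 2) K] (L : ℕ) (x : K)
    (hx : LinearIndependent (ZMod 2) fun i : Fin L => x ^ (i : ℕ))
    (ε : ℕ → ZMod 2) (h : ∑ e ∈ Finset.range L, ε e • x ^ e = 0) :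
    ∀ e < L, ε e = 0 := by
  have h2 : ∑ i : Fin L, ε (i : ℕ) • x ^ (i : ℕ) = 0 := by
    rw [Fin.sum_univ_eq_sum_range (fun e => ε e • x ^ e)]; exact h
  intro e he
  exact Fintype.linearIndependent_iff.mp hx (fun i => ε (i : ℕ)) h2 ⟨e, he⟩

theorem main_lemma
    {K : Type*} [Field K] [Fintype K] [DecidableEq K] [CharP K 2]
    [Algebra (ZMod 2) K] (L : ℕ) (hcard : Fintype.card K = 2 ^ L)
    (x : K) (hx : LinearIndependent (ZMod 2) fun i : Fin L => x ^ (i : ℕ))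
    {A : Type*} [Fintype A] [DecidableEq A]
    (s s' : List A) (hk : s'.length ≤ s.length) (hs : s.length ≤ L)
    (hs'nil : s' ≠ []) (hne : s ≠ s') (y y' : K) :
    ((Finset.univ.filter fun gH : (A → K) × K =>
        List.foldl (fun v c => x * v + gH.1 c) gH.2 s = y ∧
        List.foldl (fun v c => x * v + gH.1 c) gH.2 s' = y').card : ℚ)
      / Fintype.card ((A → K) × K) = 1 / 2 ^ (2 * L) := by
  classical
  set k := s.length with hkdef
  set k' := s'.length with hk'def
  have hk'pos : 1 ≤ k' := List.length_pos_iff.mpr hs'nil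
  have hkpos : 1 ≤ k := le_trans hk'pos hk
  have hsnil : s ≠ [] := List.length_pos_iff.mp hkpos
  set t : List A := s.reverse with htdef
  set t' : List A := s'.reverse with ht'def
  have htlen : t.length = k := by simp [htdef, hkdef]
  have ht'len : t'.length = k' := by simp [ht'def, hk'def]
  obtain ⟨c₀, t₀, ht0⟩ := List.exists_cons_of_ne_nil (by simpa [htdef] using hsnil)
  -- the hash as an explicit additive map
  set Φ : List A → (A → K) × K → K := fun r gH =>
    x ^ r.length * gH.2 + ∑ e ∈ Finset.range r.length, x ^ e * gH.1 (r.getD e c₀) with hΦdef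
  have hfold : ∀ (l : List A) (gH : (A → K) × K),
      List.foldl (fun v c => x * v + gH.1 c) gH.2 l = Φ l.reverse gH := by
    intro l gH
    rw [hΦdef]
    have := fold_formula x gH.1 c₀ l.reverse gH.2
    rw [List.reverse_reverse] at this
    simpa using this
  have hΦadd : ∀ (r : List A) (a b : (A → K) × K), Φ r (a + b) = Φ r a + Φ r b := by
    intro r a b
    simp only [hΦdef, Prod.snd_add, Prod.fst_add, Pi.add_apply, mul_add]
    rw [Finset.sum_add_distrib]
    ring
  set F : (A → K) × K →+ K × K :=
    AddMonoidHom.mk' (fun gH => (Φ t gH, Φ t' gH))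
      (by intro a b; simp [Prod.ext_iff, hΦadd]) with hFdef
  have hind : ∀ (n : ℕ) (r : List A) (c : A) (u : K),
      ∑ e ∈ Finset.range n, x ^ e * (if r.getD e c₀ = c then u else 0)
        = u * ∑ e ∈ Finset.range n, (if r.getD e c₀ = c then x ^ e else 0) := by
    intro n r c u
    rw [Finset.mul_sum]
    exact Finset.sum_congr rfl (fun e _ => by split_ifs <;> ring)
  have hFsurj : Function.Surjective F := by
    rintro ⟨w, w'⟩
    rcases Nat.lt_or_ge k 2 with h2k | h2k
    · -- both strings are singletons
      have hk1 : k = 1 := by omega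
      have hk'1 : k' = 1 := by omega
      obtain ⟨a, hsa⟩ := List.length_eq_one_iff.mp (hkdef.symm.trans hk1)
      obtain ⟨b, hsb⟩ := List.length_eq_one_iff.mp (hk'def.symm.trans hk'1)
      have hab : a ≠ b := by
        intro h; apply hne; rw [hsa, hsb, h]
      refine ⟨(fun r => if r = a then w else if r = b then w' else 0, 0), ?_⟩
      have h1 : Φ t (fun r => if r = a then w else if r = b then w' else 0, 0) = w := by
        simp [hΦdef, htdef, hsa]
      have h2 : Φ t' (fun r => if r = a then w else if r = b then w' else 0, 0) = w' := by
        simp [hΦdef, ht'def, hsb, hab.symm]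
      simp [hFdef, Prod.ext_iff, h1, h2]
    · -- the longer string has length ≥ 2
      have hL2 : 2 ≤ L := le_trans h2k hs
      have hx0 : x ≠ 0 := by
        have := hx.ne_zero ⟨1, lt_of_lt_of_le one_lt_two hL2⟩
        simpa using this
      obtain ⟨c, e₀, he₀, hce, hnot⟩ :
          ∃ (c : A) (e₀ : ℕ), e₀ < k ∧ t.getD e₀ c₀ = c ∧
            ¬(k - k' ≤ e₀ ∧ t'.getD (e₀ - (k - k')) c₀ = c) := by
        rcases lt_or_eq_of_le hk with hlt | heq
        · refine ⟨t.getD 0 c₀, 0, hkpos, rfl, ?_⟩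
          rintro ⟨habs, -⟩
          omega
        · have httne : t ≠ t' := by
            intro h
            apply hne
            have := congrArg List.reverse h
            simpa [htdef, ht'def] using this
          have hexj : ¬ ∀ j, j < k → t.getD j c₀ = t'.getD j c₀ := by
            intro hall
            apply httne
            apply List.ext_getElem (by rw [htlen, ht'len, heq])
            intro i h1 h2
            have := hall i (by rwa [htlen] at h1)
            rwa [List.getD_eq_getElem _ _ h1, List.getD_eq_getElem _ _ h2] at this
          push_neg at hexj
          obtain ⟨j₀, hj₀, hjne⟩ := hexj
          refine ⟨t.getD j₀ c₀, j₀, hj₀, rfl, ?_⟩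
          rintro ⟨-, habs⟩
          rw [show k - k' = 0 by omega, Nat.sub_zero] at habs
          exact hjne habs.symm
      set AA : K := ∑ e ∈ Finset.range k, (if t.getD e c₀ = c then x ^ e else 0) with hAA
      set BB : K := ∑ e ∈ Finset.range k', (if t'.getD e c₀ = c then x ^ e else 0) with hBB
      set DD : K := AA + x ^ (k - k') * BB with hDD
      have hDne : DD ≠ 0 := by
        intro hD0
        set ε : ℕ → ZMod 2 := fun e =>
          (if e < k ∧ t.getD e c₀ = c then 1 else 0) +
          (if k - k' ≤ e ∧ e < k ∧ t'.getD (e - (k - k')) c₀ = c then 1 else 0) with hε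
        have hsplit : ∑ e ∈ Finset.range L, ε e • x ^ e
            = (∑ e ∈ Finset.range L, (if e < k ∧ t.getD e c₀ = c then x ^ e else 0))
            + (∑ e ∈ Finset.range L,
                (if k - k' ≤ e ∧ e < k ∧ t'.getD (e - (k - k')) c₀ = c then x ^ e else 0)) := by
          rw [← Finset.sum_add_distrib]
          apply Finset.sum_congr rfl
          intro e _
          rw [hε, add_smul]
          congr 1 <;> (split_ifs <;> simp)
        have hfirst : (∑ e ∈ Finset.range L, (if e < k ∧ t.getD e c₀ = c then x ^ e else 0)) = AA := by
          have h1 : AA = ∑ e ∈ Finset.range k, (if e < k ∧ t.getD e c₀ = c then x ^ e else 0) := by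
            rw [hAA]
            exact Finset.sum_congr rfl (fun e he => by
              rw [Finset.mem_range] at he; simp [he])
          rw [h1]
          refine (Finset.sum_subset (Finset.range_subset_range.mpr hs) ?_).symm
          intro e _ he
          simp only [Finset.mem_range, not_lt] at he
          rw [if_neg]
          rintro ⟨h1, -⟩
          omega
        have hsecond : (∑ e ∈ Finset.range L,
            (if k - k' ≤ e ∧ e < k ∧ t'.getD (e - (k - k')) c₀ = c then x ^ e else 0))
            = x ^ (k - k') * BB := by
          rw [hBB, Finset.mul_sum]
          have himgsub : (Finset.range k').image (· + (k - k')) ⊆ Finset.range L := by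
            intro e he
            simp only [Finset.mem_image, Finset.mem_range] at he ⊢
            obtain ⟨e', he', rfl⟩ := he
            omega
          have hvanish : ∀ e ∈ Finset.range L, e ∉ (Finset.range k').image (· + (k - k')) →
              (if k - k' ≤ e ∧ e < k ∧ t'.getD (e - (k - k')) c₀ = c then x ^ e else 0) = 0 := by
            intro e _ hne2
            rw [if_neg]
            rintro ⟨h1, h2, -⟩
            apply hne2
            simp only [Finset.mem_image, Finset.mem_range]
            exact ⟨e - (k - k'), by omega, by omega⟩
          rw [← Finset.sum_subset himgsub hvanish]
          rw [Finset.sum_image (fun a _ b _ h => by omega)]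
          apply Finset.sum_congr rfl
          intro e' he'
          rw [Finset.mem_range] at he'
          have hc1 : k - k' ≤ e' + (k - k') := by omega
          have hc2 : e' + (k - k') < k := by omega
          have hc3 : e' + (k - k') - (k - k') = e' := by omega
          rw [hc3]
          by_cases hq : t'.getD e' c₀ = c
          · rw [if_pos ⟨hc1, hc2, hq⟩, if_pos hq, pow_add]
            ring
          · rw [if_neg (by rintro ⟨-, -, h⟩; exact hq h), if_neg hq, mul_zero]
        have hsum : ∑ e ∈ Finset.range L, ε e • x ^ e = 0 := by
          rw [hsplit, hfirst, hsecond, ← hDD]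
          exact hD0
        have hεe₀ := eps_zero L x hx ε hsum e₀ (lt_of_lt_of_le he₀ hs)
        rw [hε] at hεe₀
        simp only at hεe₀
        rw [if_pos ⟨he₀, hce⟩, if_neg (fun h => hnot ⟨h.1, h.2.2⟩)] at hεe₀
        simp at hεe₀
      have hxk' : x ^ k' ≠ 0 := pow_ne_zero _ hx0
      set u : K := (w + x ^ (k - k') * w') * DD⁻¹ with hu
      set H₀ : K := (w' + u * BB) * (x ^ k')⁻¹ with hH
      refine ⟨(fun r => if r = c then u else 0, H₀), ?_⟩
      have hΦt : Φ t (fun r => if r = c then u else 0, H₀) = x ^ k * H₀ + u * AA := by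
        simp only [hΦdef]
        rw [htlen, hind k t c u, ← hAA]
      have hΦt' : Φ t' (fun r => if r = c then u else 0, H₀) = x ^ k' * H₀ + u * BB := by
        simp only [hΦdef]
        rw [ht'len, hind k' t' c u, ← hBB]
      have h2 : x ^ k' * H₀ + u * BB = w' := by
        rw [hH, mul_comm (w' + u * BB), ← mul_assoc, mul_inv_cancel₀ hxk', one_mul,
          add_assoc, CharTwo.add_self_eq_zero, add_zero]
      have h1 : x ^ k * H₀ + u * AA = w := by
        have hxk : x ^ k = x ^ (k - k') * x ^ k' := by
          rw [← pow_add]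
          congr 1
          omega
        rw [hH, hxk, mul_assoc, mul_comm (w' + u * BB), ← mul_assoc (x ^ k'),
          mul_inv_cancel₀ hxk', one_mul]
        have hDexp : x ^ (k - k') * (w' + u * BB) + u * AA = x ^ (k - k') * w' + u * DD := by
          rw [hDD]
          ring
        rw [hDexp, hu, mul_assoc, inv_mul_cancel₀ hDne, mul_one,
          add_comm w, ← add_assoc, CharTwo.add_self_eq_zero, zero_add]
      simp [hFdef, Prod.ext_iff, hΦt, hΦt', h1, h2]
  have hsetP : (Finset.univ.filter fun gH : (A → K) × K =>
        List.foldl (fun v c => x * v + gH.1 c) gH.2 s = y ∧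
        List.foldl (fun v c => x * v + gH.1 c) gH.2 s' = y')
      = (Finset.univ.filter fun gH : (A → K) × K => F gH = (y, y')) := by
    apply Finset.filter_congr
    intro gH _
    rw [hfold s gH, hfold s' gH, hFdef]
    simp [Prod.ext_iff, htdef, ht'def]
  rw [hsetP]
  have hcount := fiber_count F hFsurj (y, y')
  have hcardW : Fintype.card (K × K) = 2 ^ (2 * L) := by
    rw [Fintype.card_prod, hcard, two_mul, pow_add]
  rw [hcardW] at hcount
  have hVpos : 0 < Fintype.card ((A → K) × K) := Fintype.card_pos
  rw [div_eq_div_iff (by exact_mod_cast hVpos.ne') (by positivity)]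
  rw [one_mul]
  exact_mod_cast hcount


/-- the Tabulated family is pairwise independent over strings of length at
most `L`. Here `K` is a finite field of characteristic 2 with `2^L` elements, `x ∈ K` has
`1, x, …, x^{L−1}` linearly independent over the prime subfield `GF(2) = ZMod 2`, and the
hash of `s₁⋯s_k` with table `Γ : A → K` and initial value `H₀` is the iterated hash
`x^k·H₀ + Σ_{i=1}^{k} x^{k−i}·Γ(sᵢ)` (compression `(y,c) ↦ x·y + Γ(c)`). For `Γ` and `H₀`
uniform and independent, any two distinct nonempty strings of length at most `L` take any
prescribed pair of hash values with probability exactly `1/2^{2L}`. -/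
theorem tabulated_pairwise_independent
    {K : Type*} [Field K] [Fintype K] [DecidableEq K] [CharP K 2]
    [Algebra (ZMod 2) K] (L : ℕ) (hL : 1 ≤ L) (hcard : Fintype.card K = 2 ^ L)
    (x : K) (hx : LinearIndependent (ZMod 2) fun i : Fin L => x ^ (i : ℕ))
    {A : Type*} [Fintype A] [DecidableEq A]
    (s s' : List A) (hs : s.length ≤ L) (hs' : s'.length ≤ L)
    (hsnil : s ≠ []) (hs'nil : s' ≠ []) (hne : s ≠ s') (y y' : K) :
    ((Finset.univ.filter fun gH : (A → K) × K =>
        List.foldl (fun v c => x * v + gH.1 c) gH.2 s = y ∧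
        List.foldl (fun v c => x * v + gH.1 c) gH.2 s' = y').card : ℚ)
      / Fintype.card ((A → K) × K) = 1 / 2 ^ (2 * L) := by
  rcases le_total s'.length s.length with h | h
  · exact main_lemma L hcard x hx s s' h hs hs'nil hne y y'
  · have hswap : (Finset.univ.filter fun gH : (A → K) × K =>
        List.foldl (fun v c => x * v + gH.1 c) gH.2 s = y ∧
        List.foldl (fun v c => x * v + gH.1 c) gH.2 s' = y')
      = (Finset.univ.filter fun gH : (A → K) × K =>
        List.foldl (fun v c => x * v + gH.1 c) gH.2 s' = y' ∧
        List.foldl (fun v c => x * v + gH.1 c) gH.2 s = y) := by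
      ext gH
      simp [and_comm]
    rw [hswap]
    exact main_lemma L hcard x hx s' s h hs' hsnil hne.symm y' y
end

section
/- Let L ≥ 1 and let V be the set of L-bit values (Fin (2^L), identified with bit vectors with bitwise XOR ⊕). Let A be a uniformly random permutation of V and H₀ a uniformly random element of V, chosen independently, and define the Pearson hash of a string s over the alphabet V by the iterated scheme with compression function (y, c) ↦ A(y ⊕ c) and initial value H₀. Then for any character a ∈ V, any n ≥ 2, and any two distinct lengths r, r' with 1 ≤ r, r' ≤ n, the probability that the unary strings a^r (the character a repeated r times) and a^{r'} collide satisfies P(h(a^r) = h(a^{r'})) ≤ (max_{1 ≤ i ≤ n−1} d(i))/2^L, where d(i) denotes the number of positive divisors of i. That is, Pearson hashing is (max_{i<n} d(i)/2^L)-almost universal over unary strings of length at most n. -/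
open Finset Equiv Function Nat

section Aux

variable {α : Type*} [Fintype α] [DecidableEq α]

private lemma card_perm_fixing (T : Finset α) :
    (Finset.univ.filter fun f : Equiv.Perm α => ∀ a ∈ T, f a = a).card
      = (Fintype.card α - T.card)! := by
  classical
  have h1 : (Finset.univ.filter fun f : Equiv.Perm α => ∀ a ∈ T, f a = a).card
      = Fintype.card {f : Equiv.Perm α // ∀ a, ¬(a ∉ T) → f a = a} := by
    rw [Fintype.card_subtype]
    congr 1
    apply Finset.filter_congr
    intro f _
    simp
  rw [h1, Fintype.card_congr (Equiv.Perm.subtypeEquivSubtypePerm (fun a : α => a ∉ T)).symm,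
    Fintype.card_perm, Fintype.card_subtype]
  congr 2
  rw [Finset.filter_not]
  simp [Finset.card_sdiff_of_subset (Finset.subset_univ T)]

private lemma mul_pred_factorial_le (n : ℕ) : n * (n - 1)! ≤ n ! := by
  cases n with
  | zero => simp [Nat.factorial]
  | succ k => simp [Nat.factorial_succ]

private lemma minPeriod_mul_swap (f : Equiv.Perm α) (x : α) (D : ℕ) (hD : 2 ≤ D)
    (h : Function.minimalPeriod ⇑f x = D) :
    Function.minimalPeriod ⇑(f * Equiv.swap x (f⁻¹ x)) (f⁻¹ x) = D - 1 := by
  have hfD : (⇑f)^[D] x = x := by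
    have := Function.isPeriodicPt_minimalPeriod ⇑f x
    rwa [h] at this
  have hp : f⁻¹ x = (⇑f)^[D - 1] x := by
    apply f.injective
    rw [Equiv.Perm.inv_def, Equiv.apply_symm_apply]
    have : (⇑f)^[D] x = f ((⇑f)^[D-1] x) := by
      rw [← Function.iterate_succ_apply' (⇑f) (D-1) x]
      congr 1
      omega
    rw [← this, hfD]
  have hinj := Function.iterate_injOn_Iio_minimalPeriod (f := ⇑f) (x := x)
  rw [h] at hinj
  set p := f⁻¹ x with hpdef
  set g := f * Equiv.swap x p with hgdef
  have key : ∀ k, 1 ≤ k → k ≤ D - 1 → (⇑g)^[k] p = (⇑f)^[k] x := by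
    intro k hk1 hk2
    induction k with
    | zero => omega
    | succ k ihk =>
      rcases Nat.eq_or_lt_of_le hk1 with h1 | h1
      · -- k + 1 = 1
        have hk0 : k = 0 := by omega
        subst hk0
        simp only [zero_add, Function.iterate_one]
        show f (Equiv.swap x p p) = f x
        rw [Equiv.swap_apply_right]
      · have hk1' : 1 ≤ k := by omega
        have hk2' : k ≤ D - 1 := by omega
        have ih := ihk hk1' hk2'
        rw [Function.iterate_succ_apply', ih]
        show f (Equiv.swap x p ((⇑f)^[k] x)) = (⇑f)^[k+1] x
        have hne1 : (⇑f)^[k] x ≠ x := by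
          intro hcon
          have : (k : ℕ) = 0 := by
            apply hinj (by simp; omega : k ∈ Set.Iio D) (by simp; omega : 0 ∈ Set.Iio D)
            simpa using hcon
          omega
        have hne2 : (⇑f)^[k] x ≠ p := by
          rw [hp]
          intro hcon
          have : k = D - 1 := hinj (by simp; omega : k ∈ Set.Iio D)
            (by simp; omega : D - 1 ∈ Set.Iio D) hcon
          omega
        rw [Equiv.swap_apply_of_ne_of_ne hne1 hne2, ← Function.iterate_succ_apply' (⇑f) k x]
  have hper : Function.IsPeriodicPt ⇑g (D - 1) p := by
    show (⇑g)^[D-1] p = p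
    rw [key (D-1) (by omega) le_rfl, ← hp]
  have hpos : 0 < Function.minimalPeriod ⇑g p :=
    hper.minimalPeriod_pos (by omega)
  have hle : Function.minimalPeriod ⇑g p ≤ D - 1 :=
    Nat.le_of_dvd (by omega) hper.minimalPeriod_dvd
  rcases Nat.eq_or_lt_of_le hle with heq | hlt
  · exact heq
  · exfalso
    have hit : (⇑g)^[Function.minimalPeriod ⇑g p] p = p :=
      Function.isPeriodicPt_minimalPeriod ⇑g p
    rw [key _ hpos hle] at hit
    have hit2 : (⇑f)^[Function.minimalPeriod ⇑g p] x = (⇑f)^[D - 1] x := hit.trans hp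
    have : Function.minimalPeriod ⇑g p = D - 1 :=
      hinj (by simp; omega : Function.minimalPeriod ⇑g p ∈ Set.Iio D)
        (by simp; omega : D - 1 ∈ Set.Iio D) hit2
    omega

private lemma card_perm_minPeriod (d : ℕ) : ∀ (x : α) (S : Finset α), x ∉ S →
    (Finset.univ.filter fun f : Equiv.Perm α =>
        Function.minimalPeriod ⇑f x = d + 1 ∧ ∀ s ∈ S, f s = s).card
      ≤ (Fintype.card α - 1 - S.card)! := by
  induction d with
  | zero =>
    intro x S hxS
    have heq : (Finset.univ.filter fun f : Equiv.Perm α =>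
        Function.minimalPeriod ⇑f x = 0 + 1 ∧ ∀ s ∈ S, f s = s)
        = Finset.univ.filter fun f : Equiv.Perm α => ∀ a ∈ insert x S, f a = a := by
      apply Finset.filter_congr
      intro f _
      simp only [Finset.forall_mem_insert, zero_add,
        Function.minimalPeriod_eq_one_iff_isFixedPt]
      rfl
    rw [heq, card_perm_fixing, Finset.card_insert_of_notMem hxS]
    apply le_of_eq
    congr 1
    omega
  | succ d ih =>
    intro x S hxS
    set Tgt := (Finset.univ \ insert x S).sigma (fun p : α =>
      Finset.univ.filter (fun g : Equiv.Perm α =>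
        Function.minimalPeriod ⇑g p = d + 1 ∧ ∀ s ∈ insert x S, g s = s)) with hTgt
    have hcard : (Finset.univ.filter fun f : Equiv.Perm α =>
        Function.minimalPeriod ⇑f x = d + 1 + 1 ∧ ∀ s ∈ S, f s = s).card ≤ Tgt.card := by
      apply Finset.card_le_card_of_injOn
        (fun f => ⟨f⁻¹ x, f * Equiv.swap x (f⁻¹ x)⟩)
      · intro f hf
        rw [Finset.mem_coe, Finset.mem_filter] at hf
        obtain ⟨-, hper, hfix⟩ := hf
        have hfx : f x ≠ x := by
          intro hcon
          rw [Function.minimalPeriod_eq_one_iff_isFixedPt.mpr hcon] at hper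
          omega
        have hpx : f⁻¹ x ≠ x := by
          intro hcon
          apply hfx
          conv_lhs => rw [← hcon]
          exact f.apply_symm_apply x
        have hpS : f⁻¹ x ∉ S := by
          intro hcon
          apply hpx
          have := hfix _ hcon
          rw [← this]
          simp [Equiv.Perm.inv_def]
        rw [Finset.mem_coe, Finset.mem_sigma]
        constructor
        · simpa using And.intro hpx hpS
        · rw [Finset.mem_filter]
          refine ⟨Finset.mem_univ _, ?_, ?_⟩
          · have := minPeriod_mul_swap f x (d + 1 + 1) (by omega) hper
            simpa using this
          · intro s hs
            rw [Finset.mem_insert] at hs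
            rcases hs with rfl | hs
            · show f (Equiv.swap s (f⁻¹ s) s) = s
              rw [Equiv.swap_apply_left, Equiv.Perm.inv_def, Equiv.apply_symm_apply]
            · have hsx : s ≠ x := by rintro rfl; exact hxS hs
              have hsp : s ≠ f⁻¹ x := by
                rintro rfl
                have := hfix _ hs
                apply hsx
                rw [← this]
                simp [Equiv.Perm.inv_def]
              show f (Equiv.swap x (f⁻¹ x) s) = s
              rw [Equiv.swap_apply_of_ne_of_ne hsx hsp]
              exact hfix _ hs
      · intro f1 h1 f2 h2 heq
        have hp := congrArg (fun z : (_ : α) × Equiv.Perm α => z.1) heq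
        have hg := congrArg (fun z : (_ : α) × Equiv.Perm α => z.2) heq
        simp only at hp hg
        rw [← hp] at hg
        exact mul_right_cancel hg
    have hTcard : Tgt.card ≤ (Fintype.card α - 1 - S.card)! := by
      rw [hTgt, Finset.card_sigma]
      have hbound : ∀ p ∈ Finset.univ \ insert x S,
          (Finset.univ.filter (fun g : Equiv.Perm α =>
            Function.minimalPeriod ⇑g p = d + 1 ∧ ∀ s ∈ insert x S, g s = s)).card
          ≤ (Fintype.card α - 1 - (S.card + 1))! := by
        intro p hp
        rw [Finset.mem_sdiff] at hp
        have := ih p (insert x S) hp.2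
        rwa [Finset.card_insert_of_notMem hxS] at this
      calc ∑ p ∈ Finset.univ \ insert x S, (Finset.univ.filter (fun g : Equiv.Perm α =>
            Function.minimalPeriod ⇑g p = d + 1 ∧ ∀ s ∈ insert x S, g s = s)).card
          ≤ ∑ _p ∈ Finset.univ \ insert x S, (Fintype.card α - 1 - (S.card + 1))! :=
            Finset.sum_le_sum hbound
        _ = (Finset.univ \ insert x S).card * (Fintype.card α - 1 - (S.card + 1))! := by
            rw [Finset.sum_const, smul_eq_mul]
        _ ≤ (Fintype.card α - 1 - S.card)! := by
            rw [Finset.card_sdiff_of_subset (Finset.subset_univ _),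
              Finset.card_insert_of_notMem hxS, Finset.card_univ]
            have h1 : Fintype.card α - (S.card + 1) = Fintype.card α - 1 - S.card := by omega
            have h2 : Fintype.card α - 1 - (S.card + 1)
                = (Fintype.card α - 1 - S.card) - 1 := by omega
            rw [h1, h2]
            exact mul_pred_factorial_le _
    exact hcard.trans hTcard

private lemma card_perm_iterate (m : ℕ) (hm : 1 ≤ m) (x : α) :
    (Finset.univ.filter fun f : Equiv.Perm α => (⇑f)^[m] x = x).card
      ≤ m.divisors.card * (Fintype.card α - 1)! := by
  classical
  rw [Finset.card_eq_sum_card_fiberwise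
    (f := fun f : Equiv.Perm α => Function.minimalPeriod ⇑f x) (t := m.divisors)
    (fun f hf => by
      rw [Finset.mem_coe, Finset.mem_filter] at hf
      exact Nat.mem_divisors.mpr
        ⟨(Function.IsPeriodicPt.minimalPeriod_dvd hf.2), by omega⟩)]
  have hbound : ∀ D ∈ m.divisors,
      ((Finset.univ.filter fun f : Equiv.Perm α => (⇑f)^[m] x = x).filter
        (fun f : Equiv.Perm α => Function.minimalPeriod ⇑f x = D)).card ≤ (Fintype.card α - 1)! := by
    intro D hD
    have hD1 : 1 ≤ D := Nat.pos_of_mem_divisors hD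
    have hsub : ((Finset.univ.filter fun f : Equiv.Perm α => (⇑f)^[m] x = x).filter
        (fun f : Equiv.Perm α => Function.minimalPeriod ⇑f x = D))
        ⊆ Finset.univ.filter (fun f : Equiv.Perm α =>
            Function.minimalPeriod ⇑f x = (D - 1) + 1 ∧ ∀ s ∈ (∅ : Finset α), f s = s) := by
      intro f hf
      simp only [Finset.mem_filter] at hf ⊢
      obtain ⟨⟨-, -⟩, hfp⟩ := hf
      exact ⟨Finset.mem_univ _, by omega, by simp⟩
    have := card_perm_minPeriod (D - 1) x (∅ : Finset α) (Finset.notMem_empty x)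
    calc _ ≤ _ := Finset.card_le_card hsub
      _ ≤ (Fintype.card α - 1 - (∅ : Finset α).card)! := this
      _ = (Fintype.card α - 1)! := by simp
  calc ∑ D ∈ m.divisors, ((Finset.univ.filter fun f : Equiv.Perm α =>
        (⇑f)^[m] x = x).filter (fun f : Equiv.Perm α => Function.minimalPeriod ⇑f x = D)).card
      ≤ ∑ _D ∈ m.divisors, (Fintype.card α - 1)! := Finset.sum_le_sum hbound
    _ = m.divisors.card * (Fintype.card α - 1)! := by rw [Finset.sum_const, smul_eq_mul]

end Aux

private lemma fin_xor_cancel {L : ℕ} : ∀ (y a : Fin (2 ^ L)), (y ^^^ a) ^^^ a = y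
  | ⟨y, hy⟩, ⟨b, hb⟩ => by
    apply Fin.ext
    show ((y ^^^ b) % 2 ^ L ^^^ b) % 2 ^ L = y
    rw [Nat.mod_eq_of_lt (Nat.xor_lt_two_pow hy hb), Nat.xor_assoc, Nat.xor_self, Nat.xor_zero,
      Nat.mod_eq_of_lt hy]

private lemma foldl_replicate_eq_iterate {L : ℕ} (A : Equiv.Perm (Fin (2 ^ L)))
    (a : Fin (2 ^ L)) (k : ℕ) : ∀ H : Fin (2 ^ L),
    List.foldl (fun y c => A (y ^^^ c)) H (List.replicate k a)
      = (fun y => A (y ^^^ a))^[k] H := by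
  induction k with
  | zero => intro H; simp
  | succ k ih =>
    intro H
    rw [List.replicate_succ, List.foldl_cons, ih, ← Function.iterate_succ_apply]


private lemma card_collision {L : ℕ} (a : Fin (2 ^ L)) (m : ℕ) (hm : 1 ≤ m) :
    (Finset.univ.filter fun AH : Equiv.Perm (Fin (2 ^ L)) × Fin (2 ^ L) =>
        (fun y => AH.1 (y ^^^ a))^[m] AH.2 = AH.2).card
      ≤ 2 ^ L * (m.divisors.card * (2 ^ L - 1)!) := by
  classical
  set xa : Equiv.Perm (Fin (2 ^ L)) :=
    Function.Involutive.toPerm (· ^^^ a) (fun y => fin_xor_cancel y a) with hxa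
  have hstep : (Finset.univ.filter fun AH : Equiv.Perm (Fin (2 ^ L)) × Fin (2 ^ L) =>
        (fun y => AH.1 (y ^^^ a))^[m] AH.2 = AH.2).card
      ≤ ((Finset.univ : Finset (Fin (2 ^ L))).sigma (fun H =>
          Finset.univ.filter (fun f : Equiv.Perm (Fin (2 ^ L)) => (⇑f)^[m] H = H))).card := by
    apply Finset.card_le_card_of_injOn
      (fun AH : Equiv.Perm (Fin (2 ^ L)) × Fin (2 ^ L) => ⟨AH.2, AH.1 * xa⟩)
    · intro AH hAH
      rw [Finset.mem_coe, Finset.mem_filter] at hAH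
      rw [Finset.mem_coe, Finset.mem_sigma]
      refine ⟨Finset.mem_univ _, ?_⟩
      rw [Finset.mem_filter]
      refine ⟨Finset.mem_univ _, ?_⟩
      have hco : ⇑(AH.1 * xa) = fun y => AH.1 (y ^^^ a) := rfl
      rw [hco]
      exact hAH.2
    · intro A1 h1 A2 h2 heq
      have hp := congrArg
        (fun z : (_ : Fin (2 ^ L)) × Equiv.Perm (Fin (2 ^ L)) => z.1) heq
      have hg := congrArg
        (fun z : (_ : Fin (2 ^ L)) × Equiv.Perm (Fin (2 ^ L)) => z.2) heq
      simp only at hp hg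
      exact Prod.ext (mul_right_cancel hg) hp
  refine hstep.trans ?_
  rw [Finset.card_sigma]
  calc ∑ H : Fin (2 ^ L), (Finset.univ.filter
        (fun f : Equiv.Perm (Fin (2 ^ L)) => (⇑f)^[m] H = H)).card
      ≤ ∑ _H : Fin (2 ^ L), m.divisors.card * (Fintype.card (Fin (2 ^ L)) - 1)! :=
        Finset.sum_le_sum (fun H _ => card_perm_iterate m hm H)
    _ = 2 ^ L * (m.divisors.card * (2 ^ L - 1)!) := by
        rw [Finset.sum_const, Finset.card_univ, Fintype.card_fin, smul_eq_mul]

/-- Pearson hashing is `(max_{1 ≤ i ≤ n−1} d(i))/2^L`-almost universal over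
unary strings of length at most `n`. The hash of a string over the `L`-bit values
(`Fin (2^L)`, identified with bit vectors under bitwise XOR `^^^`) is the iterated hash
with compression function `(y, c) ↦ A (y ^^^ c)` where `A` is a uniformly random
permutation of `Fin (2^L)`, and the initial value `H₀` is uniform and independent of `A`.
`d(i) = i.divisors.card` is the number of positive divisors of `i`. -/
theorem pearson_unary_almost_universal (L : ℕ) (hL : 1 ≤ L) (a : Fin (2 ^ L))
    (n : ℕ) (hn : 2 ≤ n) (r r' : ℕ) (hr1 : 1 ≤ r) (hr1' : 1 ≤ r')
    (hrn : r ≤ n) (hr'n : r' ≤ n) (hrr : r ≠ r') :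
    ((Finset.univ.filter fun AH : Equiv.Perm (Fin (2 ^ L)) × Fin (2 ^ L) =>
        List.foldl (fun y c => AH.1 (y ^^^ c)) AH.2 (List.replicate r a)
          = List.foldl (fun y c => AH.1 (y ^^^ c)) AH.2 (List.replicate r' a)).card : ℚ)
      / Fintype.card (Equiv.Perm (Fin (2 ^ L)) × Fin (2 ^ L))
      ≤ (((Finset.Icc 1 (n - 1)).sup fun i => i.divisors.card : ℕ) : ℚ) / 2 ^ L := by
  classical
  have hpos : 0 < 2 ^ L := by positivity
  set D : ℕ := (Finset.Icc 1 (n - 1)).sup fun i => i.divisors.card with hD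
  obtain ⟨s, s', hss, h1s', hsn, hcond⟩ :
      ∃ s s', s' < s ∧ 1 ≤ s' ∧ s ≤ n ∧
        (Finset.univ.filter fun AH : Equiv.Perm (Fin (2 ^ L)) × Fin (2 ^ L) =>
          List.foldl (fun y c => AH.1 (y ^^^ c)) AH.2 (List.replicate r a)
            = List.foldl (fun y c => AH.1 (y ^^^ c)) AH.2 (List.replicate r' a))
        = (Finset.univ.filter fun AH : Equiv.Perm (Fin (2 ^ L)) × Fin (2 ^ L) =>
          List.foldl (fun y c => AH.1 (y ^^^ c)) AH.2 (List.replicate s a)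
            = List.foldl (fun y c => AH.1 (y ^^^ c)) AH.2 (List.replicate s' a)) := by
    rcases Nat.lt_or_ge r' r with hlt | hge
    · exact ⟨r, r', hlt, hr1', hrn, rfl⟩
    · refine ⟨r', r, lt_of_le_of_ne hge hrr, hr1, hr'n, ?_⟩
      exact Finset.filter_congr fun AH _ => eq_comm
  have hmem : s - s' ∈ Finset.Icc 1 (n - 1) := by
    rw [Finset.mem_Icc]; omega
  have hsubset : (Finset.univ.filter fun AH : Equiv.Perm (Fin (2 ^ L)) × Fin (2 ^ L) =>
        List.foldl (fun y c => AH.1 (y ^^^ c)) AH.2 (List.replicate r a)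
          = List.foldl (fun y c => AH.1 (y ^^^ c)) AH.2 (List.replicate r' a))
      ⊆ Finset.univ.filter fun AH : Equiv.Perm (Fin (2 ^ L)) × Fin (2 ^ L) =>
          (fun y => AH.1 (y ^^^ a))^[s - s'] AH.2 = AH.2 := by
    rw [hcond]
    intro AH hAH
    rw [Finset.mem_filter] at hAH ⊢
    refine ⟨Finset.mem_univ _, ?_⟩
    have h2 := hAH.2
    rw [foldl_replicate_eq_iterate, foldl_replicate_eq_iterate] at h2
    have hinj : Function.Injective (fun y => AH.1 (y ^^^ a)) := by
      intro y z hyz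
      have h'' : y ^^^ a = z ^^^ a := AH.1.injective hyz
      have h3 := congrArg (fun w => w ^^^ a) h''
      simpa [fin_xor_cancel] using h3
    rw [show s = s' + (s - s') by omega, Function.iterate_add_apply] at h2
    exact (hinj.iterate s') h2
  have hc : (Finset.univ.filter fun AH : Equiv.Perm (Fin (2 ^ L)) × Fin (2 ^ L) =>
        List.foldl (fun y c => AH.1 (y ^^^ c)) AH.2 (List.replicate r a)
          = List.foldl (fun y c => AH.1 (y ^^^ c)) AH.2 (List.replicate r' a)).card
      ≤ 2 ^ L * (D * (2 ^ L - 1)!) := by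
    calc _ ≤ (Finset.univ.filter fun AH : Equiv.Perm (Fin (2 ^ L)) × Fin (2 ^ L) =>
          (fun y => AH.1 (y ^^^ a))^[s - s'] AH.2 = AH.2).card :=
        Finset.card_le_card hsubset
      _ ≤ 2 ^ L * ((s - s').divisors.card * (2 ^ L - 1)!) :=
        card_collision a (s - s') (by omega)
      _ ≤ 2 ^ L * (D * (2 ^ L - 1)!) := by
        gcongr
        exact Finset.le_sup (f := fun i => i.divisors.card) hmem
  have hcardeq : Fintype.card (Equiv.Perm (Fin (2 ^ L)) × Fin (2 ^ L))
      = (2 ^ L)! * 2 ^ L := by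
    rw [Fintype.card_prod, Fintype.card_perm, Fintype.card_fin]
  have hfact : (2 ^ L)! = 2 ^ L * (2 ^ L - 1)! := by
    conv_lhs => rw [show (2 : ℕ) ^ L = (2 ^ L - 1) + 1 by omega]
    rw [Nat.factorial_succ, show (2 ^ L - 1) + 1 = 2 ^ L by omega]
  have hnat : (Finset.univ.filter fun AH : Equiv.Perm (Fin (2 ^ L)) × Fin (2 ^ L) =>
        List.foldl (fun y c => AH.1 (y ^^^ c)) AH.2 (List.replicate r a)
          = List.foldl (fun y c => AH.1 (y ^^^ c)) AH.2 (List.replicate r' a)).card * 2 ^ L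
      ≤ D * ((2 ^ L)! * 2 ^ L) := by
    calc _ ≤ (2 ^ L * (D * (2 ^ L - 1)!)) * 2 ^ L := Nat.mul_le_mul_right _ hc
      _ = D * ((2 ^ L)! * 2 ^ L) := by rw [hfact]; ring
  rw [hcardeq]
  rw [div_le_div_iff₀ (by positivity) (by positivity)]
  exact_mod_cast hnat
end

section
/- Let L ≥ 1 and n ≥ 1, and let H be a nonempty finite set of iterated hash functions from binary strings (strings over a two-character alphabet) of length at most n to Fin (2^L), from which h is drawn uniformly at random. If H is ε-almost universal for some ε < 1 — i.e., P(h(s)=h(s')) ≤ ε for all distinct binary strings s, s' of length at most n — then n ≤ L·(ε·2^{L·(2^{L+1}+1)} + 1). -/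
/-! Auxiliary definitions and lemmas -/

/-- fixed-width little-endian bit encoding -/
def bitsOf : ℕ → ℕ → List Bool
  | 0, _ => []
  | (K+1), x => (x % 2 == 1) :: bitsOf K (x / 2)

lemma bitsOf_length : ∀ K x, (bitsOf K x).length = K
  | 0, _ => rfl
  | (K+1), x => by simp [bitsOf, bitsOf_length K]

def valOf : List Bool → ℕ
  | [] => 0
  | b :: l => (cond b 1 0) + 2 * valOf l

lemma valOf_bitsOf : ∀ K x, x < 2 ^ K → valOf (bitsOf K x) = x
  | 0, x, hx => by
      interval_cases x
      rfl
  | (K+1), x, hx => by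
      have hx2 : x / 2 < 2 ^ K := by
        rw [pow_succ] at hx; omega
      simp only [bitsOf, valOf, valOf_bitsOf K (x/2) hx2]
      rcases Nat.mod_two_eq_zero_or_one x with h | h <;> simp [h] <;> omega

lemma bitsOf_inj {K x y : ℕ} (hx : x < 2^K) (hy : y < 2^K)
    (h : bitsOf K x = bitsOf K y) : x = y := by
  rw [← valOf_bitsOf K x hx, ← valOf_bitsOf K y hy, h]

lemma iterate_shift {β : Type*} (g : β → β) (x : β) (i p : ℕ)
    (h : g^[i] x = g^[i + p] x) :
    ∀ c t, g^[t + i] x = g^[t + i + c * p] x := by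
  have step : ∀ t, g^[t + i] x = g^[t + (i + p)] x := by
    intro t
    rw [Function.iterate_add_apply, Function.iterate_add_apply, h]
  intro c
  induction c with
  | zero => simp
  | succ c ih =>
    intro t
    have e : t + i + (c+1) * p = (t + c * p) + (i + p) := by ring
    rw [e, ← step (t + c * p)]
    have e2 : t + c * p + i = t + i + c * p := by ring
    rw [e2]
    exact ih t

lemma iterate_eventually {β : Type*} (g : β → β) (x : β) (m i j : ℕ)
    (hij : i < j) (hjm : j ≤ m) (h : g^[i] x = g^[j] x) :
    g^[m] x = g^[m + Nat.factorial m] x := by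
  set p := j - i with hp
  have h' : g^[i] x = g^[i + p] x := by
    have e : i + p = j := by omega
    rw [e]; exact h
  obtain ⟨c, hc⟩ : p ∣ Nat.factorial m := Nat.dvd_factorial (by omega) (by omega)
  have key := iterate_shift g x i p h' c (m - i)
  have hc' : c * p = Nat.factorial m := by rw [mul_comm]; exact hc.symm
  have e1 : m - i + i = m := by omega
  rw [e1] at key
  rw [hc'] at key
  exact key

lemma foldl_replicate {β : Type*} (F : β → Bool → β) :
    ∀ (k : ℕ) (a : β), List.foldl F a (List.replicate k false) = (fun x => F x false)^[k] a
  | 0, a => rfl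
  | (k+1), a => by
      rw [List.replicate_succ, List.foldl_cons, foldl_replicate F k,
        Function.iterate_succ_apply]

lemma exists_big_fiber {γ δ : Type*} [DecidableEq γ] [DecidableEq δ] (H : Finset γ) (S : Finset δ)
    (f : γ → δ) (hmap : ∀ h ∈ H, f h ∈ S) (hS : S.Nonempty) :
    ∃ y ∈ S, H.card ≤ S.card * (H.filter fun h => f h = y).card := by
  by_contra hcon
  push_neg at hcon
  have hsum := Finset.card_eq_sum_card_fiberwise hmap
  have hlt : ∑ y ∈ S, S.card * (H.filter fun h => f h = y).card < ∑ _y ∈ S, H.card :=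
    Finset.sum_lt_sum_of_nonempty hS hcon
  rw [← Finset.mul_sum, ← hsum, Finset.sum_const, smul_eq_mul] at hlt
  exact lt_irrefl _ hlt

lemma numericB (m n : ℕ) (hm2 : 2 ≤ m) (habs : n + 1 ≤ m + Nat.factorial m) :
    n * ((m+1) * (m+1)) ≤ m^(2*m+1) := by
  by_cases hm4 : 4 ≤ m
  · have hfac : Nat.factorial m ≤ m^m := Nat.factorial_le_pow m
    have hmm : m ≤ m^m := Nat.le_self_pow (by omega) m
    have hnb : n ≤ m^m + m := by linarith
    calc n * ((m+1) * (m+1)) ≤ (m^m + m) * ((m+1) * (m+1)) :=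
          Nat.mul_le_mul_right _ hnb
      _ ≤ (2 * m^m) * ((2*m) * (2*m)) := by
          apply Nat.mul_le_mul
          · linarith
          · apply Nat.mul_le_mul <;> omega
      _ = 8 * m^m * m^2 := by ring
      _ ≤ m^3 * m^m * m^2 := by
          have h8 : 8 ≤ m^3 := by
            calc (8:ℕ) ≤ 4^3 := by norm_num
            _ ≤ m^3 := Nat.pow_le_pow_left hm4 3
          exact Nat.mul_le_mul_right _ (Nat.mul_le_mul_right _ h8)
      _ = m^(m+5) := by
          rw [← pow_add, ← pow_add]
          congr 1
          omega
      _ ≤ m^(2*m+1) := Nat.pow_le_pow_right (by omega) (by omega)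
  · interval_cases m
    · norm_num [Nat.factorial] at habs ⊢
      omega
    · norm_num [Nat.factorial] at habs ⊢
      omega

lemma numericC (L n : ℕ) (hL : 1 ≤ L) (hn : n < 2^L) :
    n * (2^(L+1) * 2^(L+1)) ≤ 2^(L * (2^(L+1)+1)) := by
  have h4 : (4:ℕ) ≤ 2^(L+1) := by
    have h2 : (2:ℕ)^2 ≤ 2^(L+1) := Nat.pow_le_pow_right (by norm_num) (by omega)
    norm_num at h2
    exact h2
  calc n * (2^(L+1) * 2^(L+1)) ≤ 2^L * (2^(L+1) * 2^(L+1)) :=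
        Nat.mul_le_mul_right _ (le_of_lt hn)
    _ = 2^(L + ((L+1) + (L+1))) := by rw [← pow_add, ← pow_add]
    _ ≤ 2^(L * (2^(L+1)+1)) := by
        apply Nat.pow_le_pow_right (by norm_num)
        have he : L * (2^(L+1)+1) = L * 2^(L+1) + L := by ring
        rw [he]
        have h2 := Nat.mul_le_mul_left L h4
        linarith

/-- a nonempty finite family of iterated hash functions from binary strings
of length at most `n` to `Fin (2^L)` (`h` drawn uniformly) that is `ε`-almost universal
for some `ε < 1` satisfies `n ≤ L·(ε·2^{L·(2^{L+1}+1)} + 1)`. -/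
theorem iterated_almost_universal_length_bound (L n : ℕ) (hL : 1 ≤ L) (hn : 1 ≤ n)
    (H : Finset ({s : List Bool // s.length ≤ n} → Fin (2 ^ L))) (hne : H.Nonempty)
    (hiter : ∀ h ∈ H, ∃ (F : Fin (2 ^ L) → Bool → Fin (2 ^ L)) (H0 : Fin (2 ^ L)),
      ∀ s : {s : List Bool // s.length ≤ n}, h s = List.foldl F H0 s.1)
    (ε : ℚ) (hε : ε < 1)
    (huniv : ∀ s s' : {s : List Bool // s.length ≤ n}, s ≠ s' →
      ((H.filter fun h => h s = h s').card : ℚ) / H.card ≤ ε) :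
    (n : ℚ) ≤ L * (ε * 2 ^ (L * (2 ^ (L + 1) + 1)) + 1) := by
  classical
  have Hpos : 0 < H.card := Finset.card_pos.2 hne
  have Hposℚ : (0:ℚ) < H.card := by exact_mod_cast Hpos
  have hLℚ : (1:ℚ) ≤ L := by exact_mod_cast hL
  have h2E : (0:ℚ) < 2 ^ (L * (2 ^ (L + 1) + 1)) := by positivity
  have hε0 : 0 ≤ ε := by
    have h01 : (⟨[], by simp⟩ : {s : List Bool // s.length ≤ n}) ≠
        ⟨[false], by simpa using hn⟩ := by
      simp [Subtype.ext_iff]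
    refine le_trans ?_ (huniv _ _ h01)
    positivity
  -- the general concluding step from a collision-probability lower bound
  have conclude : ∀ Sc : ℕ, 0 < Sc → (1:ℚ)/(Sc:ℚ) ≤ ε →
      n * Sc ≤ 2 ^ (L * (2 ^ (L + 1) + 1)) →
      (n : ℚ) ≤ L * (ε * 2 ^ (L * (2 ^ (L + 1) + 1)) + 1) := by
    intro Sc hScpos hSε hnS
    have hScℚ : (0:ℚ) < Sc := by exact_mod_cast hScpos
    have hnq : (n:ℚ) * Sc ≤ 2 ^ (L * (2 ^ (L + 1) + 1)) := by exact_mod_cast hnS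
    rw [div_le_iff₀ hScℚ] at hSε
    have h1 : (n:ℚ) ≤ ε * 2 ^ (L * (2 ^ (L + 1) + 1)) := by
      nlinarith [Nat.cast_nonneg (α := ℚ) n]
    nlinarith [mul_nonneg hε0 h2E.le]
  by_cases hnL : n ≤ L
  · have hnLℚ : (n:ℚ) ≤ L := by exact_mod_cast hnL
    nlinarith [mul_nonneg hε0 h2E.le]
  push_neg at hnL
  by_cases hnm : n < 2 ^ L
  · -- middle case: L < n < 2^L, use all strings of length L+1
    have hLn : L + 1 ≤ n := hnL
    set ψ : ℕ → {s : List Bool // s.length ≤ n} :=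
      fun k => ⟨bitsOf (L+1) k, by rw [bitsOf_length]; exact hLn⟩ with hψdef
    have hpair : ∀ h ∈ H, ∃ p : ℕ × ℕ, p.1 < 2^(L+1) ∧ p.2 < 2^(L+1) ∧ p.1 ≠ p.2 ∧
        h (ψ p.1) = h (ψ p.2) := by
      intro h _
      have hcard : (Finset.univ : Finset (Fin (2^L))).card < (Finset.range (2^(L+1))).card := by
        rw [Finset.card_univ, Fintype.card_fin, Finset.card_range]
        exact Nat.pow_lt_pow_right (by norm_num) (by omega)
      obtain ⟨i, hi, j, hj, hij, heq⟩ :=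
        Finset.exists_ne_map_eq_of_card_lt_of_maps_to hcard
          (f := fun a => h (ψ a)) (fun a _ => Finset.mem_univ _)
      rw [Finset.mem_range] at hi hj
      exact ⟨(i, j), hi, hj, hij, heq⟩
    set f : ({s : List Bool // s.length ≤ n} → Fin (2^L)) → ℕ × ℕ := fun h =>
      if hc : ∃ p : ℕ × ℕ, p.1 < 2^(L+1) ∧ p.2 < 2^(L+1) ∧ p.1 ≠ p.2 ∧
          h (ψ p.1) = h (ψ p.2) then hc.choose else (0,0) with hfdef
    set S : Finset (ℕ × ℕ) := Finset.range (2^(L+1)) ×ˢ Finset.range (2^(L+1)) with hS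
    have hmap : ∀ h ∈ H, f h ∈ S := by
      intro h hh
      have hc := hpair h hh
      have hs := hc.choose_spec
      simp only [hfdef, dif_pos hc]
      rw [hS, Finset.mem_product, Finset.mem_range, Finset.mem_range]
      exact ⟨hs.1, hs.2.1⟩
    have hSne : S.Nonempty := ⟨(0,0), by simp [hS]⟩
    obtain ⟨y, hyS, hfib⟩ := exists_big_fiber H S f hmap hSne
    have hfibpos : 0 < (H.filter fun h => f h = y).card := by
      rcases Nat.eq_zero_or_pos (H.filter fun h => f h = y).card with h0 | h0
      · rw [h0, mul_zero] at hfib; omega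
      · exact h0
    obtain ⟨h₀, hh₀⟩ := Finset.card_pos.1 hfibpos
    rw [Finset.mem_filter] at hh₀
    have hc₀ := hpair h₀ hh₀.1
    have hspec := hc₀.choose_spec
    have hfy : hc₀.choose = y := by
      have e : f h₀ = hc₀.choose := dif_pos hc₀
      rw [← e]; exact hh₀.2
    rw [hfy] at hspec
    have hneq : ψ y.1 ≠ ψ y.2 := by
      intro hcontra
      exact hspec.2.2.1 (bitsOf_inj hspec.1 hspec.2.1 (congrArg Subtype.val hcontra))
    have hsub : (H.filter fun h => f h = y) ⊆
        H.filter fun h => h (ψ y.1) = h (ψ y.2) := by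
      intro h hh
      rw [Finset.mem_filter] at hh ⊢
      refine ⟨hh.1, ?_⟩
      have hc := hpair h hh.1
      have hs := hc.choose_spec
      have heqf : f h = hc.choose := dif_pos hc
      have e : hc.choose = y := by rw [← heqf]; exact hh.2
      rw [e] at hs
      exact hs.2.2.2
    have hcard2 : H.card ≤ (H.filter fun h => h (ψ y.1) = h (ψ y.2)).card * S.card := by
      refine le_trans (le_trans hfib (Nat.mul_le_mul_left _ (Finset.card_le_card hsub))) ?_
      rw [Nat.mul_comm]
    have hScard : S.card = 2^(L+1) * 2^(L+1) := by
      rw [hS, Finset.card_product, Finset.card_range]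
    have hSpos : 0 < S.card := by rw [hScard]; positivity
    have hSposℚ : (0:ℚ) < S.card := by exact_mod_cast hSpos
    have hεS : (1:ℚ)/(S.card:ℚ) ≤ ε := by
      refine le_trans ?_ (huniv _ _ hneq)
      rw [div_le_div_iff₀ hSposℚ Hposℚ, one_mul]
      exact_mod_cast hcard2
    refine conclude S.card hSpos hεS ?_
    rw [hScard]
    exact numericC L n hL hnm
  · -- big case: 2^L ≤ n
    push_neg at hnm
    have hm2 : 2 ≤ 2^L := by
      have h2 : (2:ℕ)^1 ≤ 2^L := Nat.pow_le_pow_right (by norm_num) hL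
      norm_num at h2
      exact h2
    set ψ : ℕ → {s : List Bool // s.length ≤ n} :=
      fun k => ⟨List.replicate (min k n) false, by
        rw [List.length_replicate]; exact Nat.min_le_right k n⟩ with hψdef
    have hψ : ∀ k, k ≤ n → (ψ k).1 = List.replicate k false := by
      intro k hk
      simp only [hψdef, min_eq_left hk]
    have hmain : ∀ h ∈ H,
        (∃ p : ℕ × ℕ, p.1 < p.2 ∧ p.2 ≤ 2^L ∧ h (ψ p.1) = h (ψ p.2)) ∧
        (2^L + Nat.factorial (2^L) ≤ n → h (ψ (2^L)) = h (ψ (2^L + Nat.factorial (2^L)))) := by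
      intro h hh
      obtain ⟨F, H0, hF⟩ := hiter h hh
      set g : Fin (2^L) → Fin (2^L) := fun x => F x false with hg
      have hval : ∀ k, k ≤ n → h (ψ k) = g^[k] H0 := by
        intro k hk
        rw [hF, hψ k hk, foldl_replicate]
      have hcard : (Finset.univ : Finset (Fin (2^L))).card < (Finset.range (2^L+1)).card := by
        rw [Finset.card_univ, Fintype.card_fin, Finset.card_range]
        omega
      obtain ⟨i, hi, j, hj, hij, heq⟩ :=
        Finset.exists_ne_map_eq_of_card_lt_of_maps_to hcard
          (f := fun a => g^[a] H0) (fun a _ => Finset.mem_univ _)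
      rw [Finset.mem_range] at hi hj
      obtain ⟨i, j, hij', hjm, heq'⟩ : ∃ i j, i < j ∧ j ≤ 2^L ∧ g^[i] H0 = g^[j] H0 := by
        rcases lt_or_gt_of_ne hij with hlt | hgt
        · exact ⟨i, j, hlt, by omega, heq⟩
        · exact ⟨j, i, hgt, by omega, heq.symm⟩
      constructor
      · refine ⟨(i, j), hij', hjm, ?_⟩
        rw [hval i (by omega), hval j (by omega), heq']
      · intro hfit
        have hev := iterate_eventually g H0 (2^L) i j hij' hjm heq'
        rw [hval (2^L) (by omega), hval (2^L + Nat.factorial (2^L)) hfit, hev]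
    -- absolute bound on n
    have habs : n + 1 ≤ 2^L + Nat.factorial (2^L) := by
      by_contra hcon
      push_neg at hcon
      have hfit : 2^L + Nat.factorial (2^L) ≤ n := by omega
      have hneq : ψ (2^L) ≠ ψ (2^L + Nat.factorial (2^L)) := by
        intro hcontra
        have hlen := congrArg (fun s : {s : List Bool // s.length ≤ n} => s.1.length) hcontra
        simp only [hψ (2^L) (by omega), hψ _ hfit, List.length_replicate] at hlen
        have := Nat.factorial_pos (2^L)
        omega
      have hall : H.filter (fun h => h (ψ (2^L)) = h (ψ (2^L + Nat.factorial (2^L)))) = H := by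
        apply Finset.filter_true_of_mem
        intro h hh
        exact (hmain h hh).2 hfit
      have huse := huniv _ _ hneq
      rw [hall, div_self (ne_of_gt Hposℚ)] at huse
      linarith
    -- pigeonhole over H with pairs (i,j), i < j ≤ 2^L
    set S : Finset (ℕ × ℕ) := Finset.range (2^L+1) ×ˢ Finset.range (2^L+1) with hS
    set f : ({s : List Bool // s.length ≤ n} → Fin (2^L)) → ℕ × ℕ := fun h =>
      if hc : ∃ p : ℕ × ℕ, p.1 < p.2 ∧ p.2 ≤ 2^L ∧ h (ψ p.1) = h (ψ p.2)
        then hc.choose else (0,0) with hfdef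
    have hpair : ∀ h ∈ H, ∃ p : ℕ × ℕ, p.1 < p.2 ∧ p.2 ≤ 2^L ∧ h (ψ p.1) = h (ψ p.2) :=
      fun h hh => (hmain h hh).1
    have hmap : ∀ h ∈ H, f h ∈ S := by
      intro h hh
      have hc := hpair h hh
      obtain ⟨hs1, hs2, _⟩ := hc.choose_spec
      simp only [hfdef, dif_pos hc]
      rw [hS, Finset.mem_product, Finset.mem_range, Finset.mem_range]
      omega
    have hSne : S.Nonempty := ⟨(0,0), by simp [hS]⟩
    obtain ⟨y, hyS, hfib⟩ := exists_big_fiber H S f hmap hSne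
    have hfibpos : 0 < (H.filter fun h => f h = y).card := by
      rcases Nat.eq_zero_or_pos (H.filter fun h => f h = y).card with h0 | h0
      · rw [h0, mul_zero] at hfib; omega
      · exact h0
    obtain ⟨h₀, hh₀⟩ := Finset.card_pos.1 hfibpos
    rw [Finset.mem_filter] at hh₀
    have hc₀ := hpair h₀ hh₀.1
    have hspec := hc₀.choose_spec
    have hfy : hc₀.choose = y := by
      have e : f h₀ = hc₀.choose := dif_pos hc₀
      rw [← e]; exact hh₀.2
    rw [hfy] at hspec
    obtain ⟨hy1, hy2, _⟩ := hspec
    have hneq : ψ y.1 ≠ ψ y.2 := by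
      intro hcontra
      have hlen := congrArg (fun s : {s : List Bool // s.length ≤ n} => s.1.length) hcontra
      simp only [hψ y.1 (by omega), hψ y.2 (by omega), List.length_replicate] at hlen
      omega
    have hsub : (H.filter fun h => f h = y) ⊆
        H.filter fun h => h (ψ y.1) = h (ψ y.2) := by
      intro h hh
      rw [Finset.mem_filter] at hh ⊢
      refine ⟨hh.1, ?_⟩
      have hc := hpair h hh.1
      have hs := hc.choose_spec
      have heqf : f h = hc.choose := dif_pos hc
      have e : hc.choose = y := by rw [← heqf]; exact hh.2
      rw [e] at hs
      exact hs.2.2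
    have hcard2 : H.card ≤ (H.filter fun h => h (ψ y.1) = h (ψ y.2)).card * S.card := by
      refine le_trans (le_trans hfib (Nat.mul_le_mul_left _ (Finset.card_le_card hsub))) ?_
      rw [Nat.mul_comm]
    have hScard : S.card = (2^L+1) * (2^L+1) := by
      rw [hS, Finset.card_product, Finset.card_range]
    have hSpos : 0 < S.card := by rw [hScard]; positivity
    have hSposℚ : (0:ℚ) < S.card := by exact_mod_cast hSpos
    have hεS : (1:ℚ)/(S.card:ℚ) ≤ ε := by
      refine le_trans ?_ (huniv _ _ hneq)
      rw [div_le_div_iff₀ hSposℚ Hposℚ, one_mul]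
      exact_mod_cast hcard2
    refine conclude S.card hSpos hεS ?_
    rw [hScard]
    have hexp : (2:ℕ)^(L+1) = 2 * 2^L := by rw [pow_succ]; ring
    have hER : (2:ℕ)^(L * (2^(L+1)+1)) = (2^L)^(2 * 2^L + 1) := by
      rw [hexp, pow_mul]
    rw [hER]
    exact numericB (2^L) n hm2 habs
end

section
/- Let L ≥ 1 and n ≥ 1, and let H be a nonempty finite set of iterated hash functions from binary strings (strings over a two-character alphabet) of length at most n to Fin (2^L), from which h is drawn uniformly at random. If H is universal — i.e., P(h(s)=h(s')) ≤ 1/2^L for all distinct binary strings s, s' of length at most n — then n ≤ 2L + L·2^{L+1}. -/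
/-- a nonempty finite family of iterated hash functions from binary strings
of length at most `n` to `Fin (2^L)` (`h` drawn uniformly) that is universal (collision
probability at most `1/2^L`) satisfies `n ≤ 2L + L·2^{L+1}`. -/
theorem iterated_universal_length_bound (L n : ℕ) (hL : 1 ≤ L) (hn : 1 ≤ n)
    (H : Finset ({s : List Bool // s.length ≤ n} → Fin (2 ^ L))) (hne : H.Nonempty)
    (hiter : ∀ h ∈ H, ∃ (F : Fin (2 ^ L) → Bool → Fin (2 ^ L)) (H0 : Fin (2 ^ L)),
      ∀ s : {s : List Bool // s.length ≤ n}, h s = List.foldl F H0 s.1)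
    (huniv : ∀ s s' : {s : List Bool // s.length ≤ n}, s ≠ s' →
      ((H.filter fun h => h s = h s').card : ℚ) / H.card ≤ 1 / 2 ^ L) :
    n ≤ 2 * L + L * 2 ^ (L + 1) := by
  classical
  by_contra hcon
  push_neg at hcon
  have hn2 : 2 ^ (L + 1) ≤ n := by
    have h1 : 2 ^ (L + 1) ≤ L * 2 ^ (L + 1) := Nat.le_mul_of_pos_left _ hL
    omega
  set m := H.card with hm
  have hm0 : 0 < m := hne.card_pos
  -- all-zero strings
  let s0 : ℕ → {s : List Bool // s.length ≤ n} :=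
    fun a => ⟨List.replicate (min a n) false, by simp⟩
  have hs0 : ∀ a, a ≤ n → (s0 a).1 = List.replicate a false := by
    intro a ha
    simp [s0, Nat.min_eq_left ha]
  let A : ℕ → Finset _ := fun d => H.filter (fun h => h (s0 (2 ^ L + d)) = h (s0 (2 ^ L)))
  -- covering claim
  have hcover : ∀ h ∈ H, ∃ d ∈ Finset.Icc 2 (2 ^ L), h ∈ A d := by
    intro h hh
    obtain ⟨F, H0, hF⟩ := hiter h hh
    set f : Fin (2 ^ L) → Fin (2 ^ L) := fun v => F v false with hf
    set v : ℕ → Fin (2 ^ L) := fun k => f^[k] H0 with hv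
    have hfold : ∀ (k : ℕ) (b : Fin (2 ^ L)),
        List.foldl F b (List.replicate k false) = f^[k] b := by
      intro k
      induction k with
      | zero => intro b; simp
      | succ k ih =>
        intro b
        rw [List.replicate_succ, List.foldl_cons, ih (F b false),
          Function.iterate_succ_apply]
    -- pigeonhole on the first 2^L + 1 states
    have hninj : ¬ Function.Injective (fun k : Fin (2 ^ L + 1) => v k) := by
      intro hinj
      have := Fintype.card_le_of_injective _ hinj
      simp at this
    obtain ⟨i, j, hij, hvij⟩ : ∃ i j : Fin (2 ^ L + 1), i ≠ j ∧ v i = v j := by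
      by_contra hc
      push_neg at hc
      exact hninj fun i j hv => by_contra fun hne' => hc i j hne' hv
    -- normalize to i' < j'
    obtain ⟨i', j', hi'j', hle, hveq⟩ :
        ∃ i' j' : ℕ, i' < j' ∧ j' ≤ 2 ^ L ∧ v i' = v j' := by
      rcases lt_or_gt_of_ne hij with hlt | hgt
      · exact ⟨i, j, hlt, Nat.lt_succ_iff.mp j.2, hvij⟩
      · exact ⟨j, i, hgt, Nat.lt_succ_iff.mp i.2, hvij.symm⟩
    set lam : ℕ := j' - i' with hlam
    have hlam1 : 1 ≤ lam := by omega
    have hlamL : lam ≤ 2 ^ L := by omega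
    have hji : i' + lam = j' := by omega
    -- periodicity
    have hper : ∀ t, v (i' + t + lam) = v (i' + t) := by
      intro t
      have h1 : v (i' + t + lam) = f^[t] (v (i' + lam)) := by
        simp only [hv]
        rw [← Function.iterate_add_apply]
        congr 1
        omega
      have h2 : v (i' + t) = f^[t] (v i') := by
        simp only [hv]
        rw [← Function.iterate_add_apply]
        congr 1
        omega
      rw [h1, h2, hji, hveq]
    have hperiodic : ∀ a, i' ≤ a → v (a + lam) = v a := by
      intro a ha
      have := hper (a - i')
      rwa [Nat.add_sub_cancel' ha] at this
    have hv1 : v (2 ^ L + lam) = v (2 ^ L) := hperiodic _ (by omega)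
    have hv2 : v (2 ^ L + lam + lam) = v (2 ^ L + lam) := hperiodic _ (by omega)
    -- pick d
    obtain ⟨d, hd2, hdL, hvd⟩ : ∃ d, 2 ≤ d ∧ d ≤ 2 ^ L ∧ v (2 ^ L + d) = v (2 ^ L) := by
      by_cases hl1 : lam = 1
      · refine ⟨2, le_refl 2, ?_, ?_⟩
        · have := Nat.one_lt_two_pow_iff.mpr (by omega : L ≠ 0)
          omega
        · rw [hl1] at hv1 hv2
          have : (2 ^ L + 2) = 2 ^ L + 1 + 1 := by omega
          rw [this, hv2, hv1]
      · exact ⟨lam, by omega, hlamL, hv1⟩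
    refine ⟨d, Finset.mem_Icc.mpr ⟨hd2, hdL⟩, ?_⟩
    simp only [A, Finset.mem_filter]
    refine ⟨hh, ?_⟩
    have hle1 : 2 ^ L + d ≤ n := by
      have : 2 ^ (L + 1) = 2 ^ L + 2 ^ L := by ring
      omega
    have hle2 : 2 ^ L ≤ n := by omega
    rw [hF, hF, hs0 _ hle1, hs0 _ hle2, hfold, hfold]
    exact hvd
  -- counting
  have hsub : H ⊆ (Finset.Icc 2 (2 ^ L)).biUnion A := by
    intro h hh
    rw [Finset.mem_biUnion]
    exact hcover h hh
  have hsum : m ≤ ∑ d ∈ Finset.Icc 2 (2 ^ L), (A d).card :=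
    le_trans (Finset.card_le_card hsub) (Finset.card_biUnion_le)
  have hAle : ∀ d ∈ Finset.Icc 2 (2 ^ L), ((A d).card : ℚ) ≤ m / 2 ^ L := by
    intro d hd
    rw [Finset.mem_Icc] at hd
    have hsne : s0 (2 ^ L + d) ≠ s0 (2 ^ L) := by
      intro he
      have := congrArg (fun s => s.1.length) he
      simp only [s0, List.length_replicate] at this
      have hsplit : 2 ^ (L + 1) = 2 ^ L + 2 ^ L := by ring
      omega
    have h1 := huniv _ _ hsne
    rw [div_le_div_iff₀ (by positivity) (by positivity)] at h1
    rw [le_div_iff₀ (by positivity)]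
    calc ((A d).card : ℚ) * 2 ^ L ≤ 1 * m := h1
    _ = m := one_mul _
  have hfin : (m : ℚ) ≤ (2 ^ L - 1) * (m / 2 ^ L) := by
    have h1 : (m : ℚ) ≤ ∑ d ∈ Finset.Icc 2 (2 ^ L), ((A d).card : ℚ) := by
      calc (m : ℚ) ≤ ((∑ d ∈ Finset.Icc 2 (2 ^ L), (A d).card : ℕ) : ℚ) := by
            exact_mod_cast hsum
      _ = ∑ d ∈ Finset.Icc 2 (2 ^ L), ((A d).card : ℚ) := by push_cast; ring
    have h2 : ∑ d ∈ Finset.Icc 2 (2 ^ L), ((A d).card : ℚ)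
        ≤ (Finset.Icc 2 (2 ^ L)).card * ((m : ℚ) / 2 ^ L) := by
      have := Finset.sum_le_card_nsmul _ _ _ hAle
      rwa [nsmul_eq_mul] at this
    have h3 : ((Finset.Icc 2 (2 ^ L)).card : ℚ) = 2 ^ L - 1 := by
      rw [Nat.card_Icc]
      have h2L : 2 ≤ 2 ^ L := by
        have := Nat.one_lt_two_pow_iff.mpr (by omega : L ≠ 0)
        omega
      rw [Nat.cast_sub (by omega : 2 ≤ 2 ^ L + 1)]
      push_cast
      ring
    calc (m : ℚ) ≤ _ := h1
    _ ≤ (Finset.Icc 2 (2 ^ L)).card * ((m : ℚ) / 2 ^ L) := h2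
    _ = (2 ^ L - 1) * (m / 2 ^ L) := by rw [h3]
  have hmQ : (0 : ℚ) < m := by exact_mod_cast hm0
  have h2L : (0 : ℚ) < 2 ^ L := by positivity
  rw [mul_div_assoc'] at hfin
  rw [le_div_iff₀ h2L] at hfin
  nlinarith
end

section
/- Let L ≥ 1 and n ≥ 2, and let H be a nonempty finite set of iterated hash functions from binary strings (strings over a two-character alphabet) of length at most n to Fin (2^L), from which h is drawn uniformly at random. If H is strongly universal — i.e., P(h(s)=y ∧ h(s')=y') = 1/2^{2L} for all distinct binary strings s, s' of length at most n and all hash values y, y' — then n < L + 2·log₂((2^L)!) − log₂(2^L − 1). -/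
private lemma two_pow_le_factorial_succ : ∀ k : ℕ, 2 ^ k ≤ (k + 1).factorial := by
  intro k
  induction k with
  | zero => simp [Nat.factorial]
  | succ k ih =>
    rw [pow_succ, Nat.factorial_succ]
    calc 2 ^ k * 2 ≤ (k + 1).factorial * 2 := Nat.mul_le_mul_right _ ih
      _ = 2 * (k + 1).factorial := by ring
      _ ≤ (k + 1 + 1) * (k + 1).factorial := Nat.mul_le_mul_right _ (by omega)

private lemma logb_two_pow (k : ℕ) : Real.logb 2 ((2:ℝ)^k) = k := by
  rw [Real.logb, Real.log_pow, mul_div_assoc,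
    div_self (by positivity : Real.log 2 ≠ 0), mul_one]

/-- a nonempty finite family of iterated hash functions from binary strings
of length at most `n ≥ 2` to `Fin (2^L)` (`h` drawn uniformly) that is strongly universal
(every pair of distinct strings takes every pair of values with probability exactly
`1/2^{2L}`) satisfies `n < L + 2·log₂((2^L)!) − log₂(2^L − 1)`. -/
theorem iterated_strongly_universal_length_bound (L n : ℕ) (hL : 1 ≤ L) (hn : 2 ≤ n)
    (H : Finset ({s : List Bool // s.length ≤ n} → Fin (2 ^ L))) (hne : H.Nonempty)
    (hiter : ∀ h ∈ H, ∃ (F : Fin (2 ^ L) → Bool → Fin (2 ^ L)) (H0 : Fin (2 ^ L)),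
      ∀ s : {s : List Bool // s.length ≤ n}, h s = List.foldl F H0 s.1)
    (hsu : ∀ s s' : {s : List Bool // s.length ≤ n}, s ≠ s' →
      ∀ y y' : Fin (2 ^ L),
        ((H.filter fun h => h s = y ∧ h s' = y').card : ℚ) / H.card = 1 / 2 ^ (2 * L)) :
    (n : ℝ) < L + 2 * Real.logb 2 (Nat.factorial (2 ^ L)) - Real.logb 2 (2 ^ L - 1) := by
  have hm2 : 2 ≤ 2 ^ L := by
    calc 2 = 2^1 := (pow_one 2).symm
      _ ≤ 2 ^ L := Nat.pow_le_pow_right (by norm_num) hL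
  have hcard0 : H.card ≠ 0 := Finset.card_ne_zero.mpr hne
  -- Step 1 : collision counting
  have colA : ∀ s s' : {s : List Bool // s.length ≤ n}, s ≠ s' →
      (H.filter fun h => h s = h s').card * 2 ^ L = H.card := by
    intro s s' hss
    have hc : ∀ y : Fin (2^L),
        ((H.filter fun h => h s = y ∧ h s' = y).card : ℚ) * 2 ^ (2*L) = H.card := by
      intro y
      have h1 := hsu s s' hss y y
      have h0 : (H.card : ℚ) ≠ 0 := Nat.cast_ne_zero.mpr hcard0
      field_simp at h1
      linarith [h1]
    have hsplit : (H.filter fun h => h s = h s').card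
        = ∑ y : Fin (2^L), (H.filter fun h => h s = y ∧ h s' = y).card := by
      rw [Finset.card_eq_sum_card_fiberwise
        (f := fun h => h s) (t := Finset.univ) (fun _ _ => Finset.mem_univ _)]
      refine Finset.sum_congr rfl fun y _ => ?_
      congr 1
      rw [Finset.filter_filter]
      apply Finset.filter_congr
      intro h _
      constructor
      · rintro ⟨h1, h2⟩; exact ⟨h2, h2 ▸ h1.symm⟩
      · rintro ⟨h1, h2⟩; exact ⟨h1.trans h2.symm, h1⟩
    have hq : ((H.filter fun h => h s = h s').card : ℚ) * 2 ^ (2*L)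
        = 2 ^ L * H.card := by
      rw [hsplit]
      push_cast
      rw [Finset.sum_mul]
      rw [Finset.sum_congr rfl (fun y _ => hc y)]
      simp [Finset.card_univ, mul_comm]
    have hq2 : ((H.filter fun h => h s = h s').card : ℚ) * 2 ^ L = H.card := by
      have h2L : (2:ℚ) ^ (2*L) = 2 ^ L * 2 ^ L := by
        rw [two_mul, pow_add]
      have hpos : (2:ℚ) ^ L ≠ 0 := by positivity
      rw [h2L, ← mul_assoc] at hq
      exact mul_right_cancel₀ hpos (hq.trans (mul_comm _ _))
    exact_mod_cast hq2
  -- Step 2 : forward propagation of collisions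
  have fwd : ∀ h ∈ H, ∀ (s t s' t' : {s : List Bool // s.length ≤ n}) (b : Bool),
      s'.1 = s.1 ++ [b] → t'.1 = t.1 ++ [b] → h s = h t → h s' = h t' := by
    intro h hh s t s' t' b hs' ht' hst
    obtain ⟨F, H0, hF⟩ := hiter h hh
    rw [hF s', hF t', hs', ht', List.foldl_append, List.foldl_append]
    simp only [List.foldl_cons, List.foldl_nil]
    rw [← hF s, ← hF t, hst]
  -- Step 3 : backward propagation of collisions
  have bwd : ∀ (s t s' t' : {s : List Bool // s.length ≤ n}) (b : Bool),
      s'.1 = s.1 ++ [b] → t'.1 = t.1 ++ [b] → s ≠ t →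
      ∀ h ∈ H, h s' = h t' → h s = h t := by
    intro s t s' t' b hs' ht' hst h hh hcol
    have hst1 : s.1 ≠ t.1 := fun he => hst (Subtype.ext he)
    have hst' : s' ≠ t' := by
      intro he
      apply hst1
      have : s.1 ++ [b] = t.1 ++ [b] := by rw [← hs', ← ht', he]
      exact (List.append_left_injective [b]) this
    have hsub : (H.filter fun h => h s = h t) ⊆ (H.filter fun h => h s' = h t') := by
      intro g hg
      rw [Finset.mem_filter] at hg ⊢
      exact ⟨hg.1, fwd g hg.1 s t s' t' b hs' ht' hg.2⟩
    have hcards : (H.filter fun h => h s' = h t').card ≤ (H.filter fun h => h s = h t).card := by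
      have e1 := colA s t hst
      have e2 := colA s' t' hst'
      have hpow : 0 < 2 ^ L := Nat.pow_pos (by norm_num)
      exact (Nat.eq_of_mul_eq_mul_right hpow (e2.trans e1.symm)).le
    have heq := Finset.eq_of_subset_of_card_le hsub hcards
    have : h ∈ H.filter fun h => h s = h t := by
      rw [heq, Finset.mem_filter]; exact ⟨hh, hcol⟩
    exact (Finset.mem_filter.mp this).2
  -- Step 4 : n < 2 ^ L
  have hnm : n < 2 ^ L := by
    by_contra hge
    push_neg at hge
    -- the strings 0^k
    obtain ⟨zk, hzval⟩ : ∃ zk : ℕ → {s : List Bool // s.length ≤ n},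
        ∀ k, k ≤ n → (zk k).1 = List.replicate k false := by
      refine ⟨fun k => ⟨List.replicate (min k n) false, by
        simpa using min_le_right k n⟩, fun k hk => ?_⟩
      simp [Nat.min_eq_left hk]
    have hzne : ∀ k k', k ≤ n → k' ≤ n → k ≠ k' → zk k ≠ zk k' := by
      intro k k' hk hk' hne he
      apply hne
      have h2 := congrArg (fun s : {s : List Bool // s.length ≤ n} => s.1.length) he
      simp only [hzval k hk, hzval k' hk', List.length_replicate] at h2
      exact h2
    have hzsucc : ∀ k, k + 1 ≤ n → (zk (k+1)).1 = (zk k).1 ++ [false] := by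
      intro k hk
      rw [hzval (k+1) hk, hzval k (by omega), List.replicate_succ']
    -- backward induction
    have bwd_ind : ∀ (i : ℕ), ∀ d, ∀ h ∈ H, i + d ≤ n → d ≠ 0 →
        h (zk i) = h (zk (i + d)) → h (zk 0) = h (zk d) := by
      intro i
      induction i with
      | zero => intro d h hh _ _ hc; simpa using hc
      | succ i ih =>
        intro d h hh hle hd hc
        have h1 : i + d ≤ n := by omega
        apply ih d h hh h1 hd
        apply bwd (zk i) (zk (i+d)) (zk (i+1)) (zk (i+1+d)) false
          (hzsucc i (by omega)) ?_ (hzne i (i+d) (by omega) (by omega) (by omega)) h hh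
        · convert hc using 3 <;> omega
        · have : i + 1 + d = (i + d) + 1 := by omega
          rw [this]; exact hzsucc (i+d) (by omega)
    -- forward induction
    have fwd_ind : ∀ h ∈ H, h (zk 0) = h (zk 1) → ∀ d, d ≤ n → h (zk 0) = h (zk d) := by
      intro h hh h01 d
      induction d with
      | zero => intro _; rfl
      | succ d ih =>
        intro hd
        have h0d : h (zk 0) = h (zk d) := ih (by omega)
        have := fwd h hh (zk 0) (zk d) (zk 1) (zk (d+1)) false
          (hzsucc 0 (by omega)) (hzsucc d hd) h0d
        exact h01.trans this
    -- E_1 = E_d for 1 ≤ d ≤ n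
    have hE : ∀ d, 1 ≤ d → d ≤ n →
        (H.filter fun h => h (zk 0) = h (zk 1)) = (H.filter fun h => h (zk 0) = h (zk d)) := by
      intro d h1 h2
      apply Finset.eq_of_subset_of_card_le
      · intro g hg
        rw [Finset.mem_filter] at hg ⊢
        exact ⟨hg.1, fwd_ind g hg.1 hg.2 d h2⟩
      · have hd0 : (0:ℕ) ≠ d := (Nat.lt_of_lt_of_le Nat.zero_lt_one h1).ne
        have h01 : (0:ℕ) ≠ 1 := Nat.zero_ne_one
        have e1 := colA (zk 0) (zk 1) (hzne 0 1 (Nat.zero_le n) (le_trans (by norm_num) hn) h01)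
        have e2 := colA (zk 0) (zk d) (hzne 0 d (Nat.zero_le n) h2 hd0)
        have hpow : 0 < 2 ^ L := Nat.pow_pos (by norm_num)
        exact le_of_eq (Nat.eq_of_mul_eq_mul_right hpow (e2.trans e1.symm))
    -- every h is in E_1
    have hall : H ⊆ H.filter fun h => h (zk 0) = h (zk 1) := by
      intro h hh
      obtain ⟨i, j, hij, hcol⟩ := Fintype.exists_ne_map_eq_of_card_lt
        (fun i : Fin (2^L + 1) => h (zk i)) (by simp)
      rcases Ne.lt_or_gt hij with hlt | hlt
      all_goals {
        first
        | (have key : h (zk 0) = h (zk (j.1 - i.1)) := by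
            have : (i:ℕ) + (j.1 - i.1) = j.1 := by omega
            apply bwd_ind i.1 (j.1 - i.1) h hh (by omega) (by omega)
            rw [this]; exact hcol
           rw [hE (j.1 - i.1) (by omega) (by omega)]
           rw [Finset.mem_filter]
           exact ⟨hh, key⟩)
        | (have key : h (zk 0) = h (zk (i.1 - j.1)) := by
            have : (j:ℕ) + (i.1 - j.1) = i.1 := by omega
            apply bwd_ind j.1 (i.1 - j.1) h hh (by omega) (by omega)
            rw [this]; exact hcol.symm
           rw [hE (i.1 - j.1) (by omega) (by omega)]
           rw [Finset.mem_filter]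
           exact ⟨hh, key⟩)
      }
    have hfull : (H.filter fun h => h (zk 0) = h (zk 1)).card = H.card :=
      le_antisymm (Finset.card_le_card (Finset.filter_subset _ _))
        (Finset.card_le_card hall)
    have := colA (zk 0) (zk 1)
      (hzne 0 1 (Nat.zero_le n) (le_trans (by norm_num) hn) Nat.zero_ne_one)
    rw [hfull] at this
    nlinarith [Nat.pos_of_ne_zero hcard0]
  -- Step 5 : real arithmetic
  have hfact : ((2:ℝ) ^ (2^L - 1) : ℝ) ≤ ((2^L).factorial : ℝ) := by
    have h1 : 2 ^ (2^L - 1) ≤ (2^L).factorial := by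
      have := two_pow_le_factorial_succ (2^L - 1)
      have he : 2^L - 1 + 1 = 2^L := by omega
      rwa [he] at this
    exact_mod_cast h1
  have hlog1 : ((2^L - 1 : ℕ) : ℝ) ≤ Real.logb 2 ((2^L).factorial : ℝ) := by
    have hpos : (0:ℝ) < (2:ℝ) ^ (2^L - 1 : ℕ) := by positivity
    have h2 := Real.logb_le_logb_of_le (b := 2) (by norm_num) hpos hfact
    rwa [logb_two_pow] at h2
  have hlog2 : Real.logb 2 ((2:ℝ)^L - 1) ≤ L := by
    have h2L : (2:ℝ) ≤ (2:ℝ)^L := by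
      calc (2:ℝ) = 2^1 := by norm_num
        _ ≤ 2^L := by apply pow_le_pow_right₀ (by norm_num) hL
    calc Real.logb 2 ((2:ℝ)^L - 1) ≤ Real.logb 2 ((2:ℝ)^L) := by
          exact Real.logb_le_logb_of_le (by norm_num) (by linarith) (by linarith)
      _ = L := logb_two_pow L
  have hnat : n + 1 ≤ 2 * (2^L - 1) := by omega
  have hcast : (n:ℝ) + 1 ≤ 2 * ((2^L - 1 : ℕ) : ℝ) := by exact_mod_cast hnat
  have hposf : (0:ℝ) < ((2^L).factorial : ℝ) := by positivity
  linarith [hlog1, hlog2, hcast]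
end

section
/- Let L ≥ 1, let Σ be a nonempty alphabet, and let μ be any probability distribution with finite support on functions from strings over Σ to Fin (2^L) such that every function in the support of μ is an iterated hash function. Then μ is not universal over the strings of length at most 2^L + 2: there exist two distinct strings s, s' of length at most 2^L + 2 with P(h(s) = h(s')) > 1/2^L. -/
open scoped ENNReal

private lemma foldl_replicate_iter {A V : Type*} (F : V → A → V) (a : A) :
    ∀ (k : ℕ) (H0 : V), List.foldl F H0 (List.replicate k a) = (fun v => F v a)^[k] H0 := by
  intro k
  induction k with
  | zero => intro H0; rfl
  | succ k ih =>
      intro H0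
      rw [List.replicate_succ, List.foldl_cons, ih, Function.iterate_succ_apply]

/-- a finitely supported distribution on iterated hash functions into
`Fin (2^L)` (`L ≥ 1`) is never universal over the strings of length at most `2^L + 2`:
some pair of distinct such strings collides with probability exceeding `1/2^L`. -/
theorem iterated_not_universal_beyond
    {A : Type*} [Nonempty A] (L : ℕ) (hL : 1 ≤ L)
    (μ : PMF (List A → Fin (2 ^ L))) (hfin : μ.support.Finite)
    (hiter : ∀ h ∈ μ.support, ∃ (F : Fin (2 ^ L) → A → Fin (2 ^ L)) (H0 : Fin (2 ^ L)),
      ∀ s : List A, h s = List.foldl F H0 s) :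
    ∃ s s' : List A, s ≠ s' ∧ s.length ≤ 2 ^ L + 2 ∧ s'.length ≤ 2 ^ L + 2 ∧
      1 / 2 ^ L < ∑' h : List A → Fin (2 ^ L), if h s = h s' then μ h else 0 := by
  classical
  by_contra hcon
  push_neg at hcon
  obtain ⟨a⟩ := ‹Nonempty A›
  obtain ⟨n, hn⟩ : ∃ m : ℕ, m = 2 ^ L := ⟨_, rfl⟩
  have hn2 : 2 ≤ n := by
    have h21 : 2 ^ 1 ≤ 2 ^ L := Nat.pow_le_pow_right (by norm_num) hL
    rw [hn]; simpa using h21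
  set rep : ℕ → List A := fun k => List.replicate k a with hrep
  set F1 : Finset (ℕ × ℕ) := (Finset.range n).image (fun m => (m, n)) with hF1
  set F2 : Finset (ℕ × ℕ) := (Finset.Icc 1 n).image (fun m => (m, n + 1)) with hF2
  set F3 : Finset (ℕ × ℕ) := (Finset.Icc 2 (n + 1)).image (fun m => (m, n + 2)) with hF3
  set Fam : Finset (ℕ × ℕ) := F1 ∪ F2 ∪ F3 with hFam
  set Fam' : Finset (ℕ × ℕ) := Fam.erase (n, n + 1) with hFam'
  have memFam : ∀ q ∈ Fam, q.1 < q.2 ∧ q.2 ≤ n + 2 := by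
    intro q hq
    rw [hFam, hF1, hF2, hF3] at hq
    simp only [Finset.mem_union, Finset.mem_image, Finset.mem_range, Finset.mem_Icc] at hq
    rcases hq with (⟨m, hm, rfl⟩ | ⟨m, hm, rfl⟩) | ⟨m, hm, rfl⟩ <;> simp <;> omega
  have cardFam' : Fam'.card ≤ 3 * n - 1 := by
    have hmem : (n, n + 1) ∈ Fam := by
      rw [hFam]
      refine Finset.mem_union_left _ (Finset.mem_union_right _ ?_)
      rw [hF2]
      exact Finset.mem_image.2 ⟨n, Finset.mem_Icc.2 ⟨by omega, le_rfl⟩, rfl⟩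
    have a1 : F1.card ≤ n := by
      rw [hF1]
      have := Finset.card_image_le (s := Finset.range n) (f := fun m => (m, n))
      simpa using this
    have a2 : F2.card ≤ n := by
      rw [hF2]
      have := Finset.card_image_le (s := Finset.Icc 1 n) (f := fun m => (m, n + 1))
      simp only [Nat.card_Icc] at this
      omega
    have a3 : F3.card ≤ n := by
      rw [hF3]
      have := Finset.card_image_le (s := Finset.Icc 2 (n + 1)) (f := fun m => (m, n + 2))
      simp only [Nat.card_Icc] at this
      omega
    have h1 : Fam.card ≤ 3 * n := by
      calc Fam.card ≤ (F1 ∪ F2).card + F3.card := Finset.card_union_le _ _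
        _ ≤ (F1.card + F2.card) + F3.card := by
            have := Finset.card_union_le F1 F2
            omega
        _ ≤ 3 * n := by omega
    rw [hFam', Finset.card_erase_of_mem hmem]
    omega
  -- per-hash collision count
  have key : ∀ h ∈ μ.support,
      3 ≤ (Fam'.filter fun q => h (rep q.1) = h (rep q.2)).card := by
    intro h hh
    obtain ⟨F, H0, hF⟩ := hiter h hh
    set g : Fin (2 ^ L) → Fin (2 ^ L) := fun v => F v a with hg
    set s : ℕ → Fin (2 ^ L) := fun k => g^[k] H0 with hsdef
    have hs : ∀ k, h (rep k) = s k := by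
      intro k; rw [hrep]; simp only [hF]; exact foldl_replicate_iter F a k H0
    have hninj : ¬ Function.Injective (fun k : Fin (n + 1) => s (k : ℕ)) := by
      intro hinj
      have hcard := Fintype.card_le_of_injective _ hinj
      simp only [Fintype.card_fin] at hcard
      rw [← hn] at hcard
      omega
    rw [Function.not_injective_iff] at hninj
    obtain ⟨x, y, hxy, hne⟩ := hninj
    obtain ⟨i, j, hij, hjn, hsij⟩ : ∃ i j : ℕ, i < j ∧ j ≤ n ∧ s i = s j := by
      rcases lt_trichotomy (x : ℕ) (y : ℕ) with hlt | heq | hgt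
      · exact ⟨x, y, hlt, by omega, hxy⟩
      · exact absurd (Fin.ext heq) hne
      · exact ⟨y, x, hgt, by omega, hxy.symm⟩
    set d : ℕ := j - i with hd
    have hd1 : 1 ≤ d := by omega
    have hidn : i + d ≤ n := by omega
    have hper : ∀ k, i ≤ k → s (k + d) = s k := by
      intro k hk
      have h1 : k + d = (k - i) + j := by omega
      have h2 : k = (k - i) + i := by omega
      rw [h1, hsdef]
      simp only
      rw [Function.iterate_add_apply]
      have hji : g^[j] H0 = g^[i] H0 := hsij.symm
      rw [hji, ← Function.iterate_add_apply, ← h2]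
    have hsucc : ∀ k, s (k + 1) = g (s k) := by
      intro k; rw [hsdef]; simp only; rw [Function.iterate_succ_apply']
    have c0 : s (n - d) = s n := by
      have hc := hper (n - d) (by omega)
      rw [show n - d + d = n by omega] at hc
      exact hc.symm
    have c1 : s (n + 1 - d) = s (n + 1) := by
      have hc := hper (n + 1 - d) (by omega)
      rw [show n + 1 - d + d = n + 1 by omega] at hc
      exact hc.symm
    have c2 : s (n + 2 - d) = s (n + 2) := by
      have hc := hper (n + 2 - d) (by omega)
      rw [show n + 2 - d + d = n + 2 by omega] at hc
      exact hc.symm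
    have subcard : ∀ T : Finset (ℕ × ℕ), T.card = 3 →
        (T ⊆ Fam'.filter fun q => h (rep q.1) = h (rep q.2)) →
        3 ≤ (Fam'.filter fun q => h (rep q.1) = h (rep q.2)).card := by
      intro T hT hsub
      calc 3 = T.card := hT.symm
        _ ≤ _ := Finset.card_le_card hsub
    have memFam1 : ∀ m, m < n → (m, n) ∈ Fam := by
      intro m hm
      rw [hFam]
      refine Finset.mem_union_left _ (Finset.mem_union_left _ ?_)
      rw [hF1]; exact Finset.mem_image.2 ⟨m, Finset.mem_range.2 hm, rfl⟩
    have memFam2 : ∀ m, 1 ≤ m → m ≤ n → (m, n + 1) ∈ Fam := by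
      intro m h1 h2
      rw [hFam]
      refine Finset.mem_union_left _ (Finset.mem_union_right _ ?_)
      rw [hF2]; exact Finset.mem_image.2 ⟨m, Finset.mem_Icc.2 ⟨h1, h2⟩, rfl⟩
    have memFam3 : ∀ m, 2 ≤ m → m ≤ n + 1 → (m, n + 2) ∈ Fam := by
      intro m h1 h2
      rw [hFam]
      refine Finset.mem_union_right _ ?_
      rw [hF3]; exact Finset.mem_image.2 ⟨m, Finset.mem_Icc.2 ⟨h1, h2⟩, rfl⟩
    by_cases hG : s n = s (n + 1)
    · have hext : s (n + 1) = s (n + 2) := by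
        have h2 : s (n + 2) = g (s (n + 1)) := hsucc (n + 1)
        have h1 : s (n + 1) = g (s n) := hsucc n
        rw [h2, ← hG, ← h1]
        exact hG
      refine subcard {(n - d, n), (n, n + 2), (n + 1, n + 2)} ?_ ?_
      · rw [Finset.card_eq_three]
        refine ⟨(n - d, n), (n, n + 2), (n + 1, n + 2), ?_, ?_, ?_, rfl⟩
        all_goals intro hEq; rw [Prod.mk.injEq] at hEq; omega
      · intro q hq
        simp only [Finset.mem_insert, Finset.mem_singleton] at hq
        rw [Finset.mem_filter, hFam', Finset.mem_erase]
        rcases hq with rfl | rfl | rfl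
        · refine ⟨⟨?_, memFam1 _ (by omega)⟩, ?_⟩
          · intro hEq; rw [Prod.mk.injEq] at hEq; omega
          · rw [hs, hs]; exact c0
        · refine ⟨⟨?_, memFam3 n hn2 (by omega)⟩, ?_⟩
          · intro hEq; rw [Prod.mk.injEq] at hEq; omega
          · rw [hs, hs]; exact hG.trans hext
        · refine ⟨⟨?_, memFam3 (n + 1) (by omega) le_rfl⟩, ?_⟩
          · intro hEq; rw [Prod.mk.injEq] at hEq; omega
          · rw [hs, hs]; exact hext
    · have hd2 : 2 ≤ d := by
        by_contra hlt
        have hd1' : d = 1 := by omega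
        apply hG
        have hc := hper n (by omega)
        rw [hd1'] at hc
        exact hc.symm
      refine subcard {(n - d, n), (n + 1 - d, n + 1), (n + 2 - d, n + 2)} ?_ ?_
      · rw [Finset.card_eq_three]
        refine ⟨(n - d, n), (n + 1 - d, n + 1), (n + 2 - d, n + 2), ?_, ?_, ?_, rfl⟩
        all_goals intro hEq; rw [Prod.mk.injEq] at hEq; omega
      · intro q hq
        simp only [Finset.mem_insert, Finset.mem_singleton] at hq
        rw [Finset.mem_filter, hFam', Finset.mem_erase]
        rcases hq with rfl | rfl | rfl
        · refine ⟨⟨?_, memFam1 _ (by omega)⟩, ?_⟩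
          · intro hEq; rw [Prod.mk.injEq] at hEq; omega
          · rw [hs, hs]; exact c0
        · refine ⟨⟨?_, memFam2 _ (by omega) (by omega)⟩, ?_⟩
          · intro hEq; rw [Prod.mk.injEq] at hEq; omega
          · rw [hs, hs]; exact c1
        · refine ⟨⟨?_, memFam3 _ (by omega) (by omega)⟩, ?_⟩
          · intro hEq; rw [Prod.mk.injEq] at hEq; omega
          · rw [hs, hs]; exact c2
  -- averaging
  have swap : ∑ q ∈ Fam', (∑' h : List A → Fin (2 ^ L),
        if h (rep q.1) = h (rep q.2) then μ h else 0)
      = ∑' h : List A → Fin (2 ^ L),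
        ∑ q ∈ Fam', (if h (rep q.1) = h (rep q.2) then μ h else 0) :=
    (Summable.tsum_finsetSum fun q _ => ENNReal.summable).symm
  have inner : ∀ h : List A → Fin (2 ^ L),
      (∑ q ∈ Fam', if h (rep q.1) = h (rep q.2) then μ h else 0)
        = ((Fam'.filter fun q => h (rep q.1) = h (rep q.2)).card : ℝ≥0∞) * μ h := by
    intro h
    rw [← Finset.sum_filter, Finset.sum_const, nsmul_eq_mul]
  have lower : (3 : ℝ≥0∞) ≤ ∑ q ∈ Fam', (∑' h : List A → Fin (2 ^ L),
        if h (rep q.1) = h (rep q.2) then μ h else 0) := by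
    rw [swap]
    calc (3 : ℝ≥0∞) = 3 * ∑' h, μ h := by rw [μ.tsum_coe, mul_one]
      _ = ∑' h, 3 * μ h := by rw [ENNReal.tsum_mul_left]
      _ ≤ ∑' h, ∑ q ∈ Fam', (if h (rep q.1) = h (rep q.2) then μ h else 0) := by
          refine ENNReal.tsum_le_tsum fun h => ?_
          rw [inner h]
          by_cases hh : μ h = 0
          · simp [hh]
          · have hk := key h (by simpa [PMF.mem_support_iff] using hh)
            exact mul_le_mul_left (by exact_mod_cast hk) _
  have upper : ∑ q ∈ Fam', (∑' h : List A → Fin (2 ^ L),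
        if h (rep q.1) = h (rep q.2) then μ h else 0) ≤ (3 * n - 1 : ℕ) * (1 / 2 ^ L) := by
    calc _ ≤ ∑ _q ∈ Fam', (1 / 2 ^ L : ℝ≥0∞) := by
          refine Finset.sum_le_sum fun q hq => ?_
          have hq' : q ∈ Fam := Finset.mem_of_mem_erase hq
          obtain ⟨h12, h2⟩ := memFam q hq'
          refine hcon (rep q.1) (rep q.2) ?_ ?_ ?_
          · intro he
            have hlen := congrArg List.length he
            simp only [hrep, List.length_replicate] at hlen
            omega
          · simp only [hrep, List.length_replicate]
            rw [← hn]; omega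
          · simp only [hrep, List.length_replicate]
            rw [← hn]; omega
      _ = (Fam'.card : ℝ≥0∞) * (1 / 2 ^ L) := by
          rw [Finset.sum_const, nsmul_eq_mul]
      _ ≤ (3 * n - 1 : ℕ) * (1 / 2 ^ L) :=
          mul_le_mul_left (by exact_mod_cast cardFam') _
  have hfinal : ((3 * n - 1 : ℕ) : ℝ≥0∞) * (1 / 2 ^ L) < 3 := by
    have hne : (2 : ℝ≥0∞) ^ L ≠ 0 := by positivity
    have htop : (2 : ℝ≥0∞) ^ L ≠ ⊤ := ENNReal.pow_ne_top (by norm_num)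
    rw [one_div, ← div_eq_mul_inv, ENNReal.div_lt_iff (Or.inl hne) (Or.inl htop)]
    have h1 : ((3 * n - 1 : ℕ) : ℝ≥0∞) < ((3 * n : ℕ) : ℝ≥0∞) := by
      exact_mod_cast (by omega : 3 * n - 1 < 3 * n)
    have h2 : ((3 * n : ℕ) : ℝ≥0∞) = 3 * 2 ^ L := by
      rw [hn]; push_cast; ring
    rw [h2] at h1
    exact h1.trans_le (by rw [mul_comm])
  exact absurd (lt_of_le_of_lt (le_trans lower upper) hfinal) (lt_irrefl _)
end

section
/- Let L ≥ 1, let a be a character, and let M be the least common multiple of the integers 1, 2, …, 2^L. Then there exists a nonempty finite family H of iterated hash functions from strings over the one-character alphabet {a} to Fin (2^L) such that for every pair of distinct lengths r, r' with 1 ≤ r, r' ≤ 2^L + M − 2, some h ∈ H satisfies h(a^r) ≠ h(a^{r'}). Consequently, choosing h uniformly at random from H gives an ε-almost universal family, for some ε < 1, over the unary strings of length at most 2^L + M − 2. -/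
private lemma foldl_const_iterate {A V : Type*} (g : V → V) (v : V) (s : List A) :
    List.foldl (fun x _ => g x) v s = g^[s.length] v := by
  induction s generalizing v with
  | nil => rfl
  | cons b t ih =>
      simp only [List.foldl_cons, List.length_cons, ih, Function.iterate_succ_apply]

/-- over the one-character alphabet `{a}` there exists a nonempty finite
family `H` of iterated hash functions into `Fin (2^L)` that separates every pair of
distinct unary strings of length between `1` and `2^L + M − 2` (`M = lcm(1, …, 2^L)`):
for each such pair some `h ∈ H` distinguishes them. Consequently, drawing `h` uniformly
from `H` yields an `ε`-almost universal family, for some `ε < 1`, over these unary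
strings. -/
theorem iterated_unary_almost_universal_family_exists
    {A : Type*} (a : A) (L : ℕ) (hL : 1 ≤ L) :
    ∃ H : Finset (List A → Fin (2 ^ L)), H.Nonempty ∧
      (∀ h ∈ H, ∃ (F : Fin (2 ^ L) → A → Fin (2 ^ L)) (H0 : Fin (2 ^ L)),
        ∀ s : List A, h s = List.foldl F H0 s) ∧
      (∀ r r' : ℕ, r ≠ r' → 1 ≤ r → 1 ≤ r' →
        r ≤ 2 ^ L + (Finset.Icc 1 (2 ^ L)).lcm id - 2 →
        r' ≤ 2 ^ L + (Finset.Icc 1 (2 ^ L)).lcm id - 2 →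
        ∃ h ∈ H, h (List.replicate r a) ≠ h (List.replicate r' a)) ∧
      ∃ ε : ℚ, ε < 1 ∧
        ∀ r r' : ℕ, r ≠ r' → 1 ≤ r → 1 ≤ r' →
          r ≤ 2 ^ L + (Finset.Icc 1 (2 ^ L)).lcm id - 2 →
          r' ≤ 2 ^ L + (Finset.Icc 1 (2 ^ L)).lcm id - 2 →
          ((H.filter fun h =>
              h (List.replicate r a) = h (List.replicate r' a)).card : ℚ) / H.card
            ≤ ε := by
  classical
  set c := 2 ^ L with hc_def
  have hc2 : 2 ≤ c := by
    calc 2 = 2 ^ 1 := rfl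
    _ ≤ 2 ^ L := Nat.pow_le_pow_right (by norm_num) hL
  -- the min hash
  set hmin : List A → Fin c := fun s => ⟨min s.length (c - 1), by omega⟩ with hmin_def
  -- the mod hashes
  set hmod : ∀ m : {x // x ∈ Finset.Icc 1 c}, List A → Fin c := fun m s =>
    ⟨s.length % m.val, by
      have hm := Finset.mem_Icc.mp m.2
      exact lt_of_lt_of_le (Nat.mod_lt _ (by omega)) hm.2⟩ with hmod_def
  set H : Finset (List A → Fin c) :=
    insert hmin ((Finset.Icc 1 c).attach.image hmod) with hH_def
  have hminH : hmin ∈ H := Finset.mem_insert_self _ _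
  have hmodH : ∀ m, hmod m ∈ H := fun m =>
    Finset.mem_insert_of_mem (Finset.mem_image_of_mem _ (Finset.mem_attach _ m))
  -- evaluation on replicate
  have hmin_eval : ∀ r : ℕ, hmin (List.replicate r a) = ⟨min r (c - 1), by omega⟩ := by
    intro r; simp [hmin_def]
  have hmod_eval : ∀ m (r : ℕ), hmod m (List.replicate r a) =
      ⟨r % m.val, by
        have hm := Finset.mem_Icc.mp m.2
        exact lt_of_lt_of_le (Nat.mod_lt _ (by omega)) hm.2⟩ := by
    intro m r; simp [hmod_def]
  have hsep_all : ∀ r r' : ℕ, r ≠ r' → 1 ≤ r → 1 ≤ r' →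
      r ≤ c + (Finset.Icc 1 c).lcm id - 2 → r' ≤ c + (Finset.Icc 1 c).lcm id - 2 →
      ∃ h ∈ H, h (List.replicate r a) ≠ h (List.replicate r' a) := by
    intro r r' hne h1 h1' hb hb'
    set M := (Finset.Icc 1 c).lcm id with hM_def
    rcases Nat.lt_or_ge (min r r') (c - 1) with hlt | hge
    · refine ⟨hmin, hminH, ?_⟩
      rw [hmin_eval, hmin_eval]
      intro hcontra
      have := Fin.mk.inj_iff.mp hcontra
      omega
    · have hMpos : 0 < M := by
        rw [hM_def]
        apply Nat.pos_of_ne_zero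
        intro h0
        have := Finset.lcm_eq_zero_iff.mp h0
        simp at this
      have key : ∀ u v : ℕ, u < v → c - 1 ≤ u → v ≤ c + M - 2 →
          ∃ h ∈ H, h (List.replicate u a) ≠ h (List.replicate v a) := by
        intro u v huv hu hv
        have hd1 : 1 ≤ v - u := by omega
        have hd2 : v - u < M := by omega
        have hndvd : ∃ m ∈ Finset.Icc 1 c, ¬ (m ∣ (v - u)) := by
          by_contra hall
          push_neg at hall
          have : M ∣ (v - u) := Finset.lcm_dvd (fun b hb => hall b hb)
          have := Nat.le_of_dvd (by omega) this
          omega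
        obtain ⟨m, hmIcc, hmnd⟩ := hndvd
        refine ⟨hmod ⟨m, hmIcc⟩, hmodH _, ?_⟩
        rw [hmod_eval, hmod_eval]
        intro hcontra
        have hmod_eq : u % m = v % m := Fin.mk.inj_iff.mp hcontra
        have : m ∣ (v - u) :=
          (Nat.modEq_iff_dvd' (le_of_lt huv)).mp hmod_eq
        exact hmnd this
      rcases Nat.lt_or_ge r r' with h | h
      · exact key r r' h (by omega) (by omega)
      · have h' : r' < r := by omega
        obtain ⟨h, hh, hne2⟩ := key r' r h' (by omega) (by omega)
        exact ⟨h, hh, fun e => hne2 e.symm⟩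
  refine ⟨H, ⟨hmin, hminH⟩, ?_, ?_, ?_⟩
  · -- iterated
    intro h hh
    rw [hH_def, Finset.mem_insert] at hh
    rcases hh with rfl | hh
    · have iter : ∀ n : ℕ,
          (fun x : Fin c => (⟨min (x.val + 1) (c - 1), by omega⟩ : Fin c))^[n]
            ⟨0, by omega⟩ = ⟨min n (c - 1), by omega⟩ := by
        intro n
        induction n with
        | zero => apply Fin.ext; simp
        | succ n ih =>
            rw [Function.iterate_succ_apply', ih]
            apply Fin.ext
            simp only []
            omega
      refine ⟨fun x _ => ⟨min (x.val + 1) (c - 1), by omega⟩, ⟨0, by omega⟩, fun s => ?_⟩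
      rw [foldl_const_iterate, iter s.length]
    · obtain ⟨m, _, rfl⟩ := Finset.mem_image.mp hh
      have hm := Finset.mem_Icc.mp m.2
      have iter : ∀ n : ℕ,
          (fun x : Fin c => (⟨(x.val + 1) % m.val,
            lt_of_lt_of_le (Nat.mod_lt _ (by omega)) hm.2⟩ : Fin c))^[n]
            ⟨0, by omega⟩ = ⟨n % m.val,
              lt_of_lt_of_le (Nat.mod_lt _ (by omega)) hm.2⟩ := by
        intro n
        induction n with
        | zero => apply Fin.ext; simp
        | succ n ih =>
            rw [Function.iterate_succ_apply', ih]
            apply Fin.ext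
            simp only []
            exact Nat.mod_add_mod n m.val 1
      refine ⟨fun x _ => ⟨(x.val + 1) % m.val,
        lt_of_lt_of_le (Nat.mod_lt _ (by omega)) hm.2⟩, ⟨0, by omega⟩, fun s => ?_⟩
      rw [foldl_const_iterate, iter s.length]
  · exact hsep_all
  · -- almost universal
    have hcard : 0 < H.card := Finset.card_pos.mpr ⟨hmin, hminH⟩
    refine ⟨((H.card : ℚ) - 1) / H.card, ?_, ?_⟩
    · rw [div_lt_one (by exact_mod_cast hcard)]
      linarith
    · intro r r' hne h1 h1' hb hb'
      -- reuse separation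
      have hsep := hsep_all r r' hne h1 h1' hb hb'
      obtain ⟨h₀, hh₀, hne₀⟩ := hsep
      have hss : (H.filter fun h =>
          h (List.replicate r a) = h (List.replicate r' a)) ⊂ H :=
        Finset.filter_ssubset.mpr ⟨h₀, hh₀, hne₀⟩
      have hlt := Finset.card_lt_card hss
      have hle : ((H.filter fun h =>
          h (List.replicate r a) = h (List.replicate r' a)).card : ℚ) ≤ (H.card : ℚ) - 1 := by
        have h2 : (H.filter fun h =>
            h (List.replicate r a) = h (List.replicate r' a)).card + 1 ≤ H.card := hlt
        have h3 : (((H.filter fun h =>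
            h (List.replicate r a) = h (List.replicate r' a)).card + 1 : ℕ) : ℚ)
            ≤ ((H.card : ℕ) : ℚ) := Nat.cast_le.mpr h2
        push_cast at h3
        linarith
      exact (div_le_div_iff_of_pos_right (by exact_mod_cast hcard)).mpr hle
end
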